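/- arXiv:cs/0601016 — 3 statements merged into one kernel-verified Lean document; each statement's English description precedes it below -/
import Mathlib

section
/- Let f : S → ℝ be bounded measurable and let B be a nonnegative random variable with E[B^2] < ∞, independent of the process X. Then (1/2) E[(∫_0^B f(X(s)) ds)^2] = E[∫_0^B (B − v) c_f(v) dv], where c_f(v) = E[f(X(0)) f(X(v))]. -/
open MeasureTheory ProbabilityTheory Filter Topology


lemma bdd_integrable {α : Type*} [MeasurableSpace α] (μ : Measure α) [IsFiniteMeasure μ]
    {g : α → ℝ} (hg : AEStronglyMeasurable g μ) {M : ℝ} (hM : ∀ x, |g x| ≤ M) :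
    Integrable g μ :=
  ⟨hg, HasFiniteIntegral.of_bounded (C := M) (Filter.Eventually.of_forall fun x => by
    simpa [Real.norm_eq_abs] using hM x)⟩

lemma finiteIoc (a b : ℝ) : IsFiniteMeasure (volume.restrict (Set.Ioc a b)) := by
  constructor
  rw [Measure.restrict_apply_univ]
  simp [Real.volume_Ioc]

lemma bdd_intervalIntegrable {c : ℝ → ℝ} (hc : Measurable c) {M : ℝ} (hM : ∀ v, |c v| ≤ M)
    (a b : ℝ) : IntervalIntegrable c volume a b := by
  rw [intervalIntegrable_iff]
  haveI : IsFiniteMeasure (volume.restrict (Set.uIoc a b)) := by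
    rw [Set.uIoc]; exact finiteIoc _ _
  exact bdd_integrable _ hc.aestronglyMeasurable hM

lemma triangle_int {c : ℝ → ℝ} (hc : Measurable c) {M : ℝ} (hM : ∀ v, |c v| ≤ M)
    {b : ℝ} (hb : 0 ≤ b) :
    ∫ u in (0:ℝ)..b, (∫ w in (0:ℝ)..u, c w) = ∫ w in (0:ℝ)..b, (b - w) * c w := by
  have hM0 : 0 ≤ M := (abs_nonneg _).trans (hM 0)
  haveI := finiteIoc 0 b
  rw [intervalIntegral.integral_of_le hb, intervalIntegral.integral_of_le hb]
  have hK : Measurable fun q : ℝ × ℝ => (Set.Ioc 0 q.1).indicator c q.2 := by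
    have : (fun q : ℝ × ℝ => (Set.Ioc 0 q.1).indicator c q.2)
        = ({q : ℝ × ℝ | 0 < q.2 ∧ q.2 ≤ q.1}).indicator (fun q => c q.2) := by
      funext q
      by_cases h : 0 < q.2 ∧ q.2 ≤ q.1 <;>
        simp [Set.indicator_apply, Set.mem_Ioc, h]
    rw [this]
    exact (hc.comp measurable_snd).indicator
      ((measurableSet_lt measurable_const measurable_snd).inter
        (measurableSet_le measurable_snd measurable_fst))
  have hKbdd : ∀ q : ℝ × ℝ, |(Set.Ioc 0 q.1).indicator c q.2| ≤ M := by
    intro q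
    by_cases h : q.2 ∈ Set.Ioc 0 q.1 <;> simp [Set.indicator_apply, h, hM q.2, hM0]
  -- rewrite H u as an indicator integral over Ioc 0 b
  have step1 : ∫ u in Set.Ioc 0 b, (∫ w in (0:ℝ)..u, c w)
      = ∫ u in Set.Ioc 0 b, (∫ w in Set.Ioc 0 b, (Set.Ioc 0 u).indicator c w) := by
    refine setIntegral_congr_fun measurableSet_Ioc (fun u hu => ?_)
    rw [intervalIntegral.integral_of_le hu.1.le, setIntegral_indicator measurableSet_Ioc,
      Set.inter_eq_self_of_subset_right (Set.Ioc_subset_Ioc_right hu.2)]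
  rw [step1]
  have swap : ∫ u in Set.Ioc 0 b, (∫ w in Set.Ioc 0 b, (Set.Ioc 0 u).indicator c w)
      = ∫ w in Set.Ioc 0 b, (∫ u in Set.Ioc 0 b, (Set.Ioc 0 u).indicator c w) := by
    apply integral_integral_swap
    exact bdd_integrable _ (hK.aestronglyMeasurable) hKbdd
  rw [swap]
  refine setIntegral_congr_fun measurableSet_Ioc (fun w hw => ?_)
  have hptw : ∀ u, (Set.Ioc 0 u).indicator c w = (Set.Ici w).indicator (fun _ => c w) u := by
    intro u
    by_cases h : w ≤ u <;>
      simp [Set.indicator_apply, Set.mem_Ioc, Set.mem_Ici, h, hw.1]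
  simp_rw [hptw]
  rw [setIntegral_indicator measurableSet_Ici, setIntegral_const]
  have hset : Set.Ioc 0 b ∩ Set.Ici w = Set.Icc w b := by
    ext u
    simp only [Set.mem_inter_iff, Set.mem_Ioc, Set.mem_Ici, Set.mem_Icc]
    constructor
    · rintro ⟨⟨_, hub⟩, hwu⟩; exact ⟨hwu, hub⟩
    · rintro ⟨hwu, hub⟩; exact ⟨⟨lt_of_lt_of_le hw.1 hwu, hub⟩, hwu⟩
  rw [hset, Real.volume_real_Icc, max_eq_left (by linarith [hw.2] : (0:ℝ) ≤ b - w)]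
  rw [smul_eq_mul]

lemma double_int {c : ℝ → ℝ} (hc : Measurable c) {M : ℝ} (hM : ∀ v, |c v| ≤ M)
    {b : ℝ} (hb : 0 ≤ b) :
    ∫ u in (0:ℝ)..b, (∫ v in (0:ℝ)..b, c |u - v|) = 2 * ∫ v in (0:ℝ)..b, (b - v) * c v := by
  have hH : Continuous fun t => ∫ w in (0:ℝ)..t, c w :=
    intervalIntegral.continuous_primitive (fun a b => bdd_intervalIntegrable hc hM a b) 0
  have step1 : ∫ u in (0:ℝ)..b, (∫ v in (0:ℝ)..b, c |u - v|)
      = ∫ u in (0:ℝ)..b, ((∫ w in (0:ℝ)..u, c w) + ∫ w in (0:ℝ)..(b - u), c w) := by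
    apply intervalIntegral.integral_congr
    intro u hu
    rw [Set.uIcc_of_le hb] at hu
    have hcomp : Measurable fun v => c |u - v| :=
      hc.comp ((measurable_const.sub measurable_id).abs)
    have hcbdd : ∀ v, |c (|u - v|)| ≤ M := fun v => hM _
    have hsplit : ∫ v in (0:ℝ)..b, c |u - v|
        = (∫ v in (0:ℝ)..u, c |u - v|) + ∫ v in u..b, c |u - v| :=
      (intervalIntegral.integral_add_adjacent_intervals
        (bdd_intervalIntegrable hcomp hcbdd 0 u)
        (bdd_intervalIntegrable hcomp hcbdd u b)).symm
    have h1 : ∫ v in (0:ℝ)..u, c |u - v| = ∫ w in (0:ℝ)..u, c w := by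
      rw [intervalIntegral.integral_congr (g := fun v => c (u - v)) ?_]
      · have := intervalIntegral.integral_comp_sub_left (a := 0) (b := u) c u
        simpa using this
      · intro v hv
        rw [Set.uIcc_of_le hu.1] at hv
        show c |u - v| = c (u - v)
        rw [abs_of_nonneg (by linarith [hv.2] : (0:ℝ) ≤ u - v)]
    have h2 : ∫ v in u..b, c |u - v| = ∫ w in (0:ℝ)..(b - u), c w := by
      rw [intervalIntegral.integral_congr (g := fun v => c (v - u)) ?_]
      · have := intervalIntegral.integral_comp_sub_right (a := u) (b := b) c u
        simpa using this
      · intro v hv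
        rw [Set.uIcc_of_le hu.2] at hv
        show c |u - v| = c (v - u)
        rw [abs_sub_comm, abs_of_nonneg (by linarith [hv.1] : (0:ℝ) ≤ v - u)]
    show (∫ v in (0:ℝ)..b, c |u - v|)
        = (∫ w in (0:ℝ)..u, c w) + ∫ w in (0:ℝ)..(b - u), c w
    rw [hsplit, h1, h2]
  rw [step1]
  have hg2 : IntervalIntegrable (fun u => ∫ w in (0:ℝ)..(b - u), c w) volume 0 b :=
    (hH.comp (continuous_const.sub continuous_id)).intervalIntegrable 0 b
  rw [intervalIntegral.integral_add (hH.intervalIntegrable 0 b) hg2]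
  have h3 : ∫ u in (0:ℝ)..b, (∫ w in (0:ℝ)..(b - u), c w) = ∫ u in (0:ℝ)..b, ∫ w in (0:ℝ)..u, c w := by
    have := intervalIntegral.integral_comp_sub_left (a := 0) (b := b)
      (fun t => ∫ w in (0:ℝ)..t, c w) b
    simpa using this
  rw [h3, triangle_int hc hM hb]
  ring


lemma square_int {c : ℝ → ℝ} (hc : Measurable c) {M : ℝ} (hM : ∀ v, |c v| ≤ M)
    {b : ℝ} (hb : 0 ≤ b) :
    ∫ p : ℝ × ℝ, (Set.Ioc 0 b ×ˢ Set.Ioc 0 b).indicator (fun p => c |p.1 - p.2|) p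
      ∂(volume.prod volume)
      = 2 * ∫ v in (0:ℝ)..b, (b - v) * c v := by
  haveI := finiteIoc 0 b
  rw [integral_indicator (measurableSet_Ioc.prod measurableSet_Ioc)]
  rw [← Measure.prod_restrict]
  have hmeas : Measurable fun p : ℝ × ℝ => c |p.1 - p.2| :=
    hc.comp (measurable_fst.sub measurable_snd).abs
  rw [integral_prod _ (bdd_integrable _ hmeas.aestronglyMeasurable (fun p => hM _))]
  rw [← double_int hc hM hb, intervalIntegral.integral_of_le hb]
  refine setIntegral_congr_fun measurableSet_Ioc (fun u _ => ?_)
  rw [intervalIntegral.integral_of_le hb]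

/-- Let `f : S → ℝ` be bounded measurable and let `B` be a nonnegative random variable with
`E[B^2] < ∞`, independent of the process `X`. Then
`(1/2) E[(∫_0^B f(X(s)) ds)^2] = E[∫_0^B (B − v) c_f(v) dv]`,
where `c_f(v) = E[f(X(0)) f(X(v))]`. -/
theorem stmt_3 {Ω S : Type*} [MeasurableSpace Ω] [MeasurableSpace S]
    (P : Measure Ω) [IsProbabilityMeasure P]
    (ν : Measure S) [IsProbabilityMeasure ν]
    (X : ℝ → Ω → S) (hXmeas : Measurable fun q : ℝ × Ω => X q.1 q.2)
    (hXlaw : ∀ t : ℝ, 0 ≤ t → P.map (X t) = ν)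
    (hXstat : ∀ u v : ℝ, 0 ≤ u → u ≤ v →
      P.map (fun ω => (X u ω, X v ω)) = P.map (fun ω => (X 0 ω, X (v - u) ω)))
    (f : S → ℝ) (hfmeas : Measurable f) (C : ℝ) (hfbdd : ∀ x, |f x| ≤ C)
    (B : Ω → ℝ) (hBmeas : Measurable B) (hBnonneg : ∀ ω, 0 ≤ B ω)
    (hB2 : Integrable (fun ω => B ω ^ 2) P)
    (hindep : Indep (MeasurableSpace.comap B inferInstance)
      (MeasurableSpace.comap (fun ω (t : ℝ) => X t ω) MeasurableSpace.pi) P) :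
    (1 / 2 : ℝ) * ∫ ω, (∫ s in (0 : ℝ)..(B ω), f (X s ω)) ^ 2 ∂P
      = ∫ ω, (∫ v in (0 : ℝ)..(B ω), (B ω - v) * ∫ ω', f (X 0 ω') * f (X v ω') ∂P) ∂P := by
  classical
  -- basic measurability facts
  have hXt : ∀ t : ℝ, Measurable (X t) := fun t =>
    hXmeas.comp (measurable_const.prodMk measurable_id)
  have hSne : Nonempty S := by
    by_contra h
    rw [not_nonempty_iff] at h
    have h1 := measure_univ (μ := ν)
    rw [Set.univ_eq_empty_iff.mpr h] at h1
    simp at h1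
  have hC : 0 ≤ C := (abs_nonneg _).trans (hfbdd (Classical.arbitrary S))
  have hfb2 : ∀ x y : S, |f x * f y| ≤ C ^ 2 := fun x y => by
    rw [abs_mul, sq]
    exact mul_le_mul (hfbdd x) (hfbdd y) (abs_nonneg _) hC
  set c : ℝ → ℝ := fun v => ∫ ω', f (X 0 ω') * f (X v ω') ∂P with hcdef
  have hc_meas : Measurable c := by
    have h0 : Measurable fun q : ℝ × Ω => f (X 0 q.2) * f (X q.1 q.2) :=
      (hfmeas.comp ((hXt 0).comp measurable_snd)).mul (hfmeas.comp hXmeas)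
    exact h0.stronglyMeasurable.integral_prod_right'.measurable
  have hc_bdd : ∀ v, |c v| ≤ C ^ 2 := by
    intro v
    have h0 := norm_integral_le_of_norm_le_const (μ := P)
      (f := fun ω' => f (X 0 ω') * f (X v ω')) (C := C ^ 2)
      (Filter.Eventually.of_forall fun ω' => by
        rw [Real.norm_eq_abs]; exact hfb2 (X 0 ω') (X v ω'))
    rw [probReal_univ, mul_one, Real.norm_eq_abs] at h0
    exact h0
  -- stationarity
  have hstat2 : ∀ u v : ℝ, 0 ≤ u → u ≤ v →
      (∫ ω, f (X u ω) * f (X v ω) ∂P) = c (v - u) := by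
    intro u v hu huv
    have hφ : Measurable fun p : S × S => f p.1 * f p.2 :=
      (hfmeas.comp measurable_fst).mul (hfmeas.comp measurable_snd)
    have h1 := integral_map (μ := P) ((hXt u).prodMk (hXt v)).aemeasurable
      (f := fun p : S × S => f p.1 * f p.2) hφ.aestronglyMeasurable
    have h2 := integral_map (μ := P) ((hXt 0).prodMk (hXt (v - u))).aemeasurable
      (f := fun p : S × S => f p.1 * f p.2) hφ.aestronglyMeasurable
    rw [hcdef]
    simp only []
    rw [← h1, hXstat u v hu huv, h2]
  have hE : ∀ u v : ℝ, 0 < u → 0 < v →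
      (∫ ω, f (X u ω) * f (X v ω) ∂P) = c |u - v| := by
    intro u v hu hv
    rcases le_total u v with h | h
    · rw [abs_sub_comm, abs_of_nonneg (sub_nonneg.2 h)]
      exact hstat2 u v hu.le h
    · rw [abs_of_nonneg (sub_nonneg.2 h)]
      have hcomm : (fun ω => f (X u ω) * f (X v ω)) = fun ω => f (X v ω) * f (X u ω) := by
        funext ω; ring
      rw [hcomm]
      exact hstat2 v u hv.le h
  -- the region and the two integrands on `Ω × ℝ × ℝ`
  set A : Set (Ω × ℝ × ℝ) :=
    {x | (0 < x.2.1 ∧ x.2.1 ≤ B x.1) ∧ (0 < x.2.2 ∧ x.2.2 ≤ B x.1)} with hAdef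
  have hq1 : Measurable fun x : Ω × ℝ × ℝ => x.2.1 := measurable_snd.fst
  have hq2 : Measurable fun x : Ω × ℝ × ℝ => x.2.2 := measurable_snd.snd
  have hqB : Measurable fun x : Ω × ℝ × ℝ => B x.1 := hBmeas.comp measurable_fst
  have hA : MeasurableSet A :=
    ((measurableSet_lt measurable_const hq1).inter (measurableSet_le hq1 hqB)).inter
      ((measurableSet_lt measurable_const hq2).inter (measurableSet_le hq2 hqB))
  set m1 : Ω × ℝ × ℝ → ℝ := fun x => f (X x.2.1 x.1) * f (X x.2.2 x.1) with hm1def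
  set m2 : Ω × ℝ × ℝ → ℝ := fun x => c |x.2.1 - x.2.2| with hm2def
  have hm1 : Measurable m1 :=
    (hfmeas.comp (hXmeas.comp (hq1.prodMk measurable_fst))).mul
      (hfmeas.comp (hXmeas.comp (hq2.prodMk measurable_fst)))
  have hm2 : Measurable m2 := hc_meas.comp ((hq1.sub hq2).abs)
  -- the dominating function is integrable
  have hdom : Integrable (A.indicator fun _ => C ^ 2) (P.prod (volume.prod volume)) := by
    rw [integrable_indicator_iff hA]
    refine (integrableOn_const_iff).2 (Or.inr ?_)
    rw [Measure.prod_apply hA]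
    have hsec : ∀ ω, (volume.prod volume) (Prod.mk ω ⁻¹' A) = ENNReal.ofReal (B ω ^ 2) := by
      intro ω
      have hpre : Prod.mk ω ⁻¹' A = Set.Ioc 0 (B ω) ×ˢ Set.Ioc 0 (B ω) := by
        ext p
        simp [hAdef, Set.mem_Ioc]
      rw [hpre, Measure.prod_prod, Real.volume_Ioc, sub_zero,
        ← ENNReal.ofReal_mul (hBnonneg ω), ← sq]
    rw [lintegral_congr hsec]
    have hle : ∫⁻ ω, ENNReal.ofReal (B ω ^ 2) ∂P ≤ ∫⁻ ω, ‖B ω ^ 2‖ₑ ∂P :=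
      lintegral_mono fun ω => le_of_eq (Real.enorm_eq_ofReal (sq_nonneg _)).symm
    exact lt_of_le_of_lt hle hB2.2
  have hI1int : Integrable (A.indicator m1) (P.prod (volume.prod volume)) := by
    refine Integrable.mono' hdom (hm1.indicator hA).aestronglyMeasurable
      (Filter.Eventually.of_forall fun x => ?_)
    by_cases hx : x ∈ A
    · simp only [Set.indicator_of_mem hx, Real.norm_eq_abs]
      exact hfb2 _ _
    · simp [Set.indicator_of_notMem hx]
  have hI2int : Integrable (A.indicator m2) (P.prod (volume.prod volume)) := by
    refine Integrable.mono' hdom (hm2.indicator hA).aestronglyMeasurable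
      (Filter.Eventually.of_forall fun x => ?_)
    by_cases hx : x ∈ A
    · simp only [Set.indicator_of_mem hx, Real.norm_eq_abs]
      exact hc_bdd _
    · simp [Set.indicator_of_notMem hx]
  -- Step 1 : the square as a double integral
  have step1 : ∫ ω, (∫ s in (0 : ℝ)..(B ω), f (X s ω)) ^ 2 ∂P
      = ∫ ω, ∫ p : ℝ × ℝ, A.indicator m1 (ω, p) ∂(volume.prod volume) ∂P := by
    refine integral_congr_ae (Filter.Eventually.of_forall fun ω => ?_)
    dsimp only
    rw [intervalIntegral.integral_of_le (hBnonneg ω),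
      ← integral_indicator (measurableSet_Ioc (a := (0:ℝ)) (b := B ω)), sq,
      ← integral_prod_mul (μ := volume) (ν := volume)]
    refine integral_congr_ae (Filter.Eventually.of_forall fun p => ?_)
    by_cases h1 : p.1 ∈ Set.Ioc 0 (B ω) <;> by_cases h2 : p.2 ∈ Set.Ioc 0 (B ω)
    · have hmem : (ω, p) ∈ A := ⟨h1, h2⟩
      simp [Set.indicator_of_mem, h1, h2, hmem, hm1def]
    · have hmem : (ω, p) ∉ A := fun hc => h2 hc.2
      simp [Set.indicator_of_mem h1, Set.indicator_of_notMem h2,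
        Set.indicator_of_notMem hmem]
    · have hmem : (ω, p) ∉ A := fun hc => h1 hc.1
      simp [Set.indicator_of_notMem h1, Set.indicator_of_notMem hmem]
    · have hmem : (ω, p) ∉ A := fun hc => h1 hc.1
      simp [Set.indicator_of_notMem h1, Set.indicator_of_notMem hmem]
  -- Step 2 : Fubini
  have step2 : ∫ ω, ∫ p : ℝ × ℝ, A.indicator m1 (ω, p) ∂(volume.prod volume) ∂P
      = ∫ p : ℝ × ℝ, ∫ ω, A.indicator m1 (ω, p) ∂P ∂(volume.prod volume) :=
    integral_integral_swap (f := fun ω p => A.indicator m1 (ω, p)) hI1int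
  -- Step 3 : independence and stationarity pointwise in p
  have step3 : ∀ p : ℝ × ℝ, ∫ ω, A.indicator m1 (ω, p) ∂P = ∫ ω, A.indicator m2 (ω, p) ∂P := by
    intro p
    by_cases hu : 0 < p.1
    · by_cases hv : 0 < p.2
      · -- main case
        have hg : Measurable ((Set.Ici (max p.1 p.2)).indicator fun _ => (1:ℝ)) :=
          measurable_const.indicator measurableSet_Ici
        have e1 : ∀ ω, A.indicator m1 (ω, p)
            = (Set.Ici (max p.1 p.2)).indicator (fun _ => (1:ℝ)) (B ω)
              * (f (X p.1 ω) * f (X p.2 ω)) := by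
          intro ω
          by_cases hm : B ω ∈ Set.Ici (max p.1 p.2)
          · have hm' : max p.1 p.2 ≤ B ω := hm
            have hmem : (ω, p) ∈ A :=
              ⟨⟨hu, le_trans (le_max_left _ _) hm'⟩, ⟨hv, le_trans (le_max_right _ _) hm'⟩⟩
            rw [Set.indicator_of_mem hmem, Set.indicator_of_mem hm, one_mul]
          · have hmem : (ω, p) ∉ A := fun hc => hm (Set.mem_Ici.2 (max_le hc.1.2 hc.2.2))
            rw [Set.indicator_of_notMem hmem, Set.indicator_of_notMem hm, zero_mul]
        have e2 : ∀ ω, A.indicator m2 (ω, p)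
            = (Set.Ici (max p.1 p.2)).indicator (fun _ => (1:ℝ)) (B ω) * c |p.1 - p.2| := by
          intro ω
          by_cases hm : B ω ∈ Set.Ici (max p.1 p.2)
          · have hmem : (ω, p) ∈ A :=
              ⟨⟨hu, le_trans (le_max_left _ _) hm⟩, ⟨hv, le_trans (le_max_right _ _) hm⟩⟩
            rw [Set.indicator_of_mem hmem, Set.indicator_of_mem hm, one_mul]
          · have hmem : (ω, p) ∉ A := fun hc => hm (Set.mem_Ici.2 (max_le hc.1.2 hc.2.2))
            rw [Set.indicator_of_notMem hmem, Set.indicator_of_notMem hm, zero_mul]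
        rw [integral_congr_ae (Filter.Eventually.of_forall e1),
          integral_congr_ae (Filter.Eventually.of_forall e2)]
        -- use independence
        have hφ : Measurable fun y : ℝ → S => f (y p.1) * f (y p.2) :=
          (hfmeas.comp (measurable_pi_apply p.1)).mul (hfmeas.comp (measurable_pi_apply p.2))
        have hIF : IndepFun B (fun ω (t : ℝ) => X t ω) P := hindep
        have hind2 : IndepFun (((Set.Ici (max p.1 p.2)).indicator fun _ => (1:ℝ)) ∘ B)
            ((fun y : ℝ → S => f (y p.1) * f (y p.2)) ∘ (fun ω (t : ℝ) => X t ω)) P :=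
          hIF.comp hg hφ
        have hYmeas : Measurable fun ω => f (X p.1 ω) * f (X p.2 ω) :=
          (hfmeas.comp (hXt p.1)).mul (hfmeas.comp (hXt p.2))
        have int1 : Integrable ((((Set.Ici (max p.1 p.2)).indicator fun _ => (1:ℝ))) ∘ B) P := by
          refine bdd_integrable P (hg.comp hBmeas).aestronglyMeasurable (M := 1) fun ω => ?_
          by_cases h : B ω ∈ Set.Ici (max p.1 p.2) <;>
            simp [Function.comp_apply, Set.indicator_of_mem, Set.indicator_of_notMem, h]
        have int2 : Integrable (fun ω => f (X p.1 ω) * f (X p.2 ω)) P :=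
          bdd_integrable P hYmeas.aestronglyMeasurable (M := C ^ 2) fun ω => hfb2 _ _
        have hmul := hind2.integral_mul_eq_mul_integral int1.aestronglyMeasurable int2.aestronglyMeasurable
        simp only [Pi.mul_apply, Function.comp_apply] at hmul
        calc ∫ ω, (Set.Ici (max p.1 p.2)).indicator (fun _ => (1:ℝ)) (B ω)
              * (f (X p.1 ω) * f (X p.2 ω)) ∂P
            = (∫ ω, (Set.Ici (max p.1 p.2)).indicator (fun _ => (1:ℝ)) (B ω) ∂P)
              * ∫ ω, f (X p.1 ω) * f (X p.2 ω) ∂P := hmul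
          _ = (∫ ω, (Set.Ici (max p.1 p.2)).indicator (fun _ => (1:ℝ)) (B ω) ∂P)
              * c |p.1 - p.2| := by rw [hE p.1 p.2 hu hv]
          _ = ∫ ω, (Set.Ici (max p.1 p.2)).indicator (fun _ => (1:ℝ)) (B ω)
              * c |p.1 - p.2| ∂P := (integral_mul_const _ _).symm
      · -- p.2 ≤ 0 : both sides vanish
        have z1 : ∀ ω, A.indicator m1 (ω, p) = 0 := fun ω =>
          Set.indicator_of_notMem (fun hc => hv hc.2.1) _
        have z2 : ∀ ω, A.indicator m2 (ω, p) = 0 := fun ω =>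
          Set.indicator_of_notMem (fun hc => hv hc.2.1) _
        rw [integral_congr_ae (Filter.Eventually.of_forall z1),
          integral_congr_ae (Filter.Eventually.of_forall z2)]
    · have z1 : ∀ ω, A.indicator m1 (ω, p) = 0 := fun ω =>
        Set.indicator_of_notMem (fun hc => hu hc.1.1) _
      have z2 : ∀ ω, A.indicator m2 (ω, p) = 0 := fun ω =>
        Set.indicator_of_notMem (fun hc => hu hc.1.1) _
      rw [integral_congr_ae (Filter.Eventually.of_forall z1),
        integral_congr_ae (Filter.Eventually.of_forall z2)]
  -- Step 4 : Fubini back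
  have step4 : ∫ p : ℝ × ℝ, ∫ ω, A.indicator m2 (ω, p) ∂P ∂(volume.prod volume)
      = ∫ ω, ∫ p : ℝ × ℝ, A.indicator m2 (ω, p) ∂(volume.prod volume) ∂P :=
    (integral_integral_swap (f := fun ω p => A.indicator m2 (ω, p)) hI2int).symm
  -- Step 5 : the inner double integral
  have step5 : ∀ ω, ∫ p : ℝ × ℝ, A.indicator m2 (ω, p) ∂(volume.prod volume)
      = 2 * ∫ v in (0:ℝ)..(B ω), (B ω - v) * c v := by
    intro ω
    have hrw : (fun p : ℝ × ℝ => A.indicator m2 (ω, p))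
        = fun p : ℝ × ℝ => (Set.Ioc 0 (B ω) ×ˢ Set.Ioc 0 (B ω)).indicator
            (fun p => c |p.1 - p.2|) p := by
      funext p
      by_cases h : (0 < p.1 ∧ p.1 ≤ B ω) ∧ (0 < p.2 ∧ p.2 ≤ B ω)
      · have hmem : (ω, p) ∈ A := h
        have hmem2 : p ∈ Set.Ioc 0 (B ω) ×ˢ Set.Ioc 0 (B ω) := ⟨h.1, h.2⟩
        rw [Set.indicator_of_mem hmem, Set.indicator_of_mem hmem2]
      · have hmem : (ω, p) ∉ A := h
        have hmem2 : p ∉ Set.Ioc 0 (B ω) ×ˢ Set.Ioc 0 (B ω) := by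
          intro hc
          exact h ⟨hc.1, hc.2⟩
        rw [Set.indicator_of_notMem hmem, Set.indicator_of_notMem hmem2]
    rw [hrw]
    exact square_int hc_meas hc_bdd (hBnonneg ω)
  -- putting everything together
  have hfinal : ∫ ω, (∫ s in (0 : ℝ)..(B ω), f (X s ω)) ^ 2 ∂P
      = 2 * ∫ ω, (∫ v in (0:ℝ)..(B ω), (B ω - v) * c v) ∂P := by
    rw [step1, step2, integral_congr_ae (Filter.Eventually.of_forall step3), step4,
      integral_congr_ae (Filter.Eventually.of_forall step5)]
    exact integral_const_mul 2 _
  rw [hfinal]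
  ring
end

section
/- Let p : S → [0,∞) be bounded measurable and let B be a nonnegative random variable with E[B^2] < ∞, independent of the process X. Then, as ε → 0+, E[1 − exp(−ε ∫_0^B p(X(s)) ds)] = ε E[B] · ∫_S p dν − ε^2 E[∫_0^B (B − v) c_p(v) dv] + o(ε^2), where c_p(v) = E[p(X(0)) p(X(v))]. -/
open MeasureTheory ProbabilityTheory Filter Topology Asymptotics

lemma aux_exp_taylor {x : ℝ} (hx : 0 ≤ x) :
    |Real.exp (-x) - (1 - x + x ^ 2 / 2)| ≤ x ^ 2 * min x 1 := by
  rcases le_or_gt x 1 with h1 | h1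
  · have hb := Real.exp_bound (x := -x) (by rwa [abs_neg, abs_of_nonneg hx]) (n := 3)
      (by norm_num)
    have hs : ∑ i ∈ Finset.range 3, (-x) ^ i / (Nat.factorial i) = 1 - x + x ^ 2 / 2 := by
      simp [Finset.sum_range_succ, Nat.factorial]
      ring
    rw [hs] at hb
    refine hb.trans ?_
    rw [abs_neg, abs_of_nonneg hx, min_eq_left h1]
    have h3 : (0:ℝ) ≤ x ^ 3 := pow_nonneg hx 3
    have h4 : x ^ 3 * (((3:ℕ).succ : ℝ) / ((Nat.factorial 3) * 3)) ≤ x ^ 3 := by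
      norm_num [Nat.factorial]
      nlinarith
    refine h4.trans ?_
    nlinarith
  · have he1 : Real.exp (-x) ≤ 1 := by
      rw [← Real.exp_zero]; exact Real.exp_le_exp.2 (by linarith)
    have he0 : (0:ℝ) < Real.exp (-x) := Real.exp_pos _
    rw [min_eq_right h1.le, abs_le]
    constructor <;> nlinarith

lemma aux_integrable_of_le_indicator {α : Type*} [MeasurableSpace α] {μ : Measure α}
    {f : α → ℝ} {A : Set α} {c : ℝ} (hf : AEStronglyMeasurable f μ) (hA : MeasurableSet A)
    (hμA : μ A < ⊤) (hb : ∀ x, ‖f x‖ ≤ c * A.indicator 1 x) : Integrable f μ := by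
  have hind : Integrable (fun x => c * A.indicator 1 x) μ :=
    (((integrable_indicator_iff hA).2 (integrableOn_const hμA.ne))).const_mul c
  exact hind.mono' hf (ae_of_all _ hb)

set_option maxHeartbeats 1000000 in
/-- Let `p : S → [0,∞)` be bounded measurable and let `B` be a nonnegative random variable with
`E[B^2] < ∞`, independent of the process `X`. Then, as `ε → 0+`,
`E[1 − exp(−ε ∫_0^B p(X(s)) ds)] = ε E[B] ⬝ ∫_S p dν − ε^2 E[∫_0^B (B − v) c_p(v) dv] + o(ε^2)`,
where `c_p(v) = E[p(X(0)) p(X(v))]`. -/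
theorem stmt_8 {Ω S : Type*} [MeasurableSpace Ω] [MeasurableSpace S]
    (P : Measure Ω) [IsProbabilityMeasure P]
    (ν : Measure S) [IsProbabilityMeasure ν]
    (X : ℝ → Ω → S) (hXmeas : Measurable fun q : ℝ × Ω => X q.1 q.2)
    (hXlaw : ∀ t : ℝ, 0 ≤ t → P.map (X t) = ν)
    (hXstat : ∀ u v : ℝ, 0 ≤ u → u ≤ v →
      P.map (fun ω => (X u ω, X v ω)) = P.map (fun ω => (X 0 ω, X (v - u) ω)))
    (p : S → ℝ) (hpmeas : Measurable p) (hpnonneg : ∀ x, 0 ≤ p x)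
    (C : ℝ) (hpbdd : ∀ x, p x ≤ C)
    (B : Ω → ℝ) (hBmeas : Measurable B) (hBnonneg : ∀ ω, 0 ≤ B ω)
    (hB2 : Integrable (fun ω => B ω ^ 2) P)
    (hindep : Indep (MeasurableSpace.comap B inferInstance)
      (MeasurableSpace.comap (fun ω (t : ℝ) => X t ω) MeasurableSpace.pi) P) :
    (fun ε : ℝ =>
        (∫ ω, (1 - Real.exp (-ε * ∫ s in (0 : ℝ)..(B ω), p (X s ω))) ∂P)
          - (ε * (∫ ω, B ω ∂P) * (∫ x, p x ∂ν)
              - ε ^ 2 * ∫ ω, (∫ v in (0 : ℝ)..(B ω),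
                  (B ω - v) * ∫ ω', p (X 0 ω') * p (X v ω') ∂P) ∂P))
      =o[𝓝[>] (0 : ℝ)] (fun ε : ℝ => ε ^ 2) := by
  set Y : Ω → ℝ := fun ω => ∫ s in (0 : ℝ)..(B ω), p (X s ω) with hYdef
  set cp : ℝ → ℝ := fun v => ∫ ω', p (X 0 ω') * p (X v ω') ∂P with hcpdef
  set T : ℝ := ∫ ω, (∫ v in (0 : ℝ)..(B ω), (B ω - v) * cp v) ∂P with hTdef
  show (fun ε : ℝ => (∫ ω, (1 - Real.exp (-ε * Y ω)) ∂P)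
      - (ε * (∫ ω, B ω ∂P) * (∫ x, p x ∂ν) - ε ^ 2 * T)) =o[𝓝[>] (0 : ℝ)] fun ε : ℝ => ε ^ 2
  -- basic facts
  have hSne : Nonempty S := by
    by_contra h
    rw [not_nonempty_iff] at h
    have h1 : (ν Set.univ) = 1 := measure_univ
    rw [Set.univ_eq_empty_iff.2 h, measure_empty] at h1
    exact zero_ne_one h1
  have hC0 : 0 ≤ C := le_trans (hpnonneg (Classical.arbitrary S)) (hpbdd _)
  have hXt : ∀ t : ℝ, Measurable (X t) :=
    fun t => hXmeas.comp (measurable_const.prodMk measurable_id)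
  have hpX : Measurable fun q : Ω × ℝ => p (X q.2 q.1) :=
    hpmeas.comp (hXmeas.comp (measurable_snd.prodMk measurable_fst))
  set A : Set (Ω × ℝ) := {q | 0 < q.2 ∧ q.2 < B q.1} with hAdef
  have hAm : MeasurableSet A :=
    (measurableSet_lt measurable_const measurable_snd).inter
      (measurableSet_lt measurable_snd (hBmeas.comp measurable_fst))
  set f : Ω × ℝ → ℝ := A.indicator (fun q => p (X q.2 q.1)) with hfdef
  have hfmeas : Measurable f := hpX.indicator hAm
  have hfb : ∀ q, ‖f q‖ ≤ C * A.indicator 1 q := by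
    intro q
    by_cases hq : q ∈ A
    · rw [hfdef, Set.indicator_of_mem hq, Set.indicator_of_mem hq,
        Real.norm_eq_abs, abs_of_nonneg (hpnonneg _)]
      simpa using hpbdd _
    · simp [hfdef, Set.indicator_of_notMem hq]
  have hfslice : ∀ ω, (fun s => f (ω, s)) = (Set.Ioo 0 (B ω)).indicator (fun s => p (X s ω)) := by
    intro ω
    funext s
    simp only [hfdef, hAdef, Set.indicator_apply, Set.mem_setOf_eq, Set.mem_Ioo]
  have hYf : ∀ ω, Y ω = ∫ s, f (ω, s) := by
    intro ω
    show (∫ s in (0:ℝ)..(B ω), p (X s ω)) = _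
    rw [intervalIntegral.integral_of_le (hBnonneg ω), integral_Ioc_eq_integral_Ioo,
      ← integral_indicator measurableSet_Ioo, ← hfslice ω]
  have hYmeas : Measurable Y := by
    have h1 := (hfmeas.stronglyMeasurable).integral_prod_right'
      (ν := (volume : Measure ℝ))
    have h2 : Y = fun ω => ∫ s, f (ω, s) := funext hYf
    rw [h2]
    exact h1.measurable
  have hYnn : ∀ ω, 0 ≤ Y ω := fun ω =>
    intervalIntegral.integral_nonneg (hBnonneg ω) (fun s _ => hpnonneg _)
  have hYle : ∀ ω, Y ω ≤ C * B ω := by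
    intro ω
    have hm : Measurable fun s => p (X s ω) :=
      hpmeas.comp (hXmeas.comp (measurable_id.prodMk measurable_const))
    have hint : IntervalIntegrable (fun s => p (X s ω)) volume 0 (B ω) := by
      rw [intervalIntegrable_iff]
      refine Integrable.mono' (g := fun _ => C) (integrableOn_const ?_)
        hm.aestronglyMeasurable.restrict (ae_of_all _ fun s => ?_)
      · rw [Set.uIoc_of_le (hBnonneg ω), Real.volume_Ioc]
        exact ENNReal.ofReal_ne_top
      · rw [Real.norm_eq_abs, abs_of_nonneg (hpnonneg _)]
        exact hpbdd _
    have h2 : Y ω ≤ ∫ s in (0:ℝ)..(B ω), C :=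
      intervalIntegral.integral_mono_on (hBnonneg ω) hint intervalIntegrable_const
        (fun s _ => hpbdd _)
    simpa [mul_comm] using h2
  have hBint : Integrable B P := by
    refine ((integrable_const (1:ℝ)).add hB2).mono' hBmeas.aestronglyMeasurable
      (ae_of_all _ fun ω => ?_)
    rw [Real.norm_eq_abs, abs_of_nonneg (hBnonneg ω)]
    show B ω ≤ 1 + B ω ^ 2
    nlinarith [hBnonneg ω, sq_nonneg (B ω - 1)]
  have hYint : Integrable Y P := by
    refine (hBint.const_mul C).mono' hYmeas.aestronglyMeasurable (ae_of_all _ fun ω => ?_)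
    rw [Real.norm_eq_abs, abs_of_nonneg (hYnn ω)]
    exact hYle ω
  have hY2int : Integrable (fun ω => Y ω ^ 2) P := by
    refine (hB2.const_mul (C^2)).mono' (hYmeas.pow_const 2).aestronglyMeasurable
      (ae_of_all _ fun ω => ?_)
    rw [Real.norm_eq_abs, abs_of_nonneg (sq_nonneg _)]
    nlinarith [hYnn ω, hYle ω, hBnonneg ω, sq_nonneg (B ω)]
  -- finiteness of the indicator set
  have hpre : ∀ ω, Prod.mk ω ⁻¹' A = Set.Ioo 0 (B ω) := fun ω => rfl
  have hAfin : (P.prod volume) A < ⊤ := by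
    rw [Measure.prod_apply hAm]
    calc ∫⁻ ω, volume (Prod.mk ω ⁻¹' A) ∂P = ∫⁻ ω, ENNReal.ofReal (B ω) ∂P := by
          refine lintegral_congr fun ω => ?_
          rw [hpre ω, Real.volume_Ioo, sub_zero]
      _ = ENNReal.ofReal (∫ ω, B ω ∂P) :=
          (ofReal_integral_eq_lintegral_ofReal hBint (ae_of_all _ hBnonneg)).symm
      _ < ⊤ := ENNReal.ofReal_lt_top
  have hfint : Integrable f (P.prod volume) :=
    aux_integrable_of_le_indicator hfmeas.aestronglyMeasurable hAm hAfin hfb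
  have hBsetm : ∀ s : ℝ, MeasurableSet {ω | s < B ω} :=
    fun s => measurableSet_lt measurable_const hBmeas
  -- independence
  have hIF : IndepFun B (fun ω (t : ℝ) => X t ω) P := hindep
  have hmul : ∀ (s : ℝ) (g : (ℝ → S) → ℝ), Measurable g → (∀ φ, 0 ≤ g φ) →
      ∫ ω, (Set.Ioi s).indicator (fun _ => (1:ℝ)) (B ω) * g (fun t => X t ω) ∂P
        = (P {ω | s < B ω}).toReal * ∫ ω, g (fun t => X t ω) ∂P := by
    intro s g hg hg0
    have hind : IndepFun (fun ω => (Set.Ioi s).indicator (fun _ => (1:ℝ)) (B ω))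
        (fun ω => g (fun t => X t ω)) P :=
      hIF.comp (measurable_const.indicator measurableSet_Ioi) hg
    have hprod := hind.integral_fun_mul_eq_mul_integral
      ((measurable_const.indicator measurableSet_Ioi).comp hBmeas).aestronglyMeasurable
      (hg.comp (measurable_pi_lambda _ (fun t => hXt t))).aestronglyMeasurable
    have hindeq : (fun ω => (Set.Ioi s).indicator (fun _ => (1:ℝ)) (B ω))
        = {ω | s < B ω}.indicator (fun _ => (1:ℝ)) := by
      funext ω
      by_cases h : s < B ω <;> simp [Set.indicator_apply, h]
    calc ∫ ω, (Set.Ioi s).indicator (fun _ => (1:ℝ)) (B ω) * g (fun t => X t ω) ∂P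
        = (∫ ω, (Set.Ioi s).indicator (fun _ => (1:ℝ)) (B ω) ∂P)
            * ∫ ω, g (fun t => X t ω) ∂P := hprod
      _ = (P {ω | s < B ω}).toReal * ∫ ω, g (fun t => X t ω) ∂P := by
          rw [hindeq, integral_indicator_const (1:ℝ) (hBsetm s), smul_eq_mul, mul_one, measureReal_def]
  -- inner integral computation
  have hinner1 : ∀ s : ℝ, (∫ ω, f (ω, s) ∂P)
      = (Set.Ioi (0:ℝ)).indicator
          (fun s => (P {ω | s < B ω}).toReal * ∫ x, p x ∂ν) s := by
    intro s
    by_cases hs : 0 < s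
    · have hfs : (fun ω => f (ω, s))
          = fun ω => (Set.Ioi s).indicator (fun _ => (1:ℝ)) (B ω)
              * (fun φ : ℝ → S => p (φ s)) (fun t => X t ω) := by
        funext ω
        by_cases h : s < B ω <;>
          simp [hfdef, hAdef, Set.indicator_apply, hs, h]
      have hlaw : ∫ ω, (fun φ : ℝ → S => p (φ s)) (fun t => X t ω) ∂P = ∫ x, p x ∂ν := by
        show ∫ ω, p (X s ω) ∂P = ∫ x, p x ∂ν
        rw [← hXlaw s hs.le, integral_map (hXt s).aemeasurable hpmeas.aestronglyMeasurable]
      rw [hfs, hmul s (fun φ => p (φ s)) (hpmeas.comp (measurable_pi_apply s))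
        (fun φ => hpnonneg _), hlaw, Set.indicator_of_mem (Set.mem_Ioi.2 hs)]
    · have hz : ∀ ω, f (ω, s) = 0 := fun ω => by
        simp [hfdef, hAdef, Set.indicator_apply, hs]
      simp [hz, Set.indicator_of_notMem, hs]
  -- representation of E[B]
  set f0 : Ω × ℝ → ℝ := A.indicator (fun _ => (1:ℝ)) with hf0def
  have hf0meas : Measurable f0 := measurable_const.indicator hAm
  have hf0int : Integrable f0 (P.prod volume) := by
    refine aux_integrable_of_le_indicator (c := 1) hf0meas.aestronglyMeasurable hAm hAfin
      (fun q => ?_)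
    by_cases h : q ∈ A <;> simp [hf0def, Set.indicator_apply, h]
  have hB_rep : ∫ ω, B ω ∂P = ∫ s, (∫ ω, f0 (ω, s) ∂P) := by
    have h1 : ∀ ω, B ω = ∫ s, f0 (ω, s) := by
      intro ω
      have hsl : (fun s => f0 (ω, s)) = (Set.Ioo 0 (B ω)).indicator (fun _ => (1:ℝ)) := by
        funext s
        simp only [hf0def, hAdef, Set.indicator_apply, Set.mem_setOf_eq, Set.mem_Ioo]
      rw [hsl, integral_indicator_const (1:ℝ) measurableSet_Ioo, smul_eq_mul, mul_one, measureReal_def,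
        Real.volume_Ioo, sub_zero, ENNReal.toReal_ofReal (hBnonneg ω)]
    calc ∫ ω, B ω ∂P = ∫ ω, (∫ s, f0 (ω, s)) ∂P := integral_congr_ae (ae_of_all _ h1)
      _ = ∫ s, (∫ ω, f0 (ω, s) ∂P) :=
          integral_integral_swap (f := fun ω s => f0 (ω, s)) hf0int
  have hinner0 : ∀ s : ℝ, (∫ ω, f0 (ω, s) ∂P)
      = (Set.Ioi (0:ℝ)).indicator (fun s => (P {ω | s < B ω}).toReal) s := by
    intro s
    by_cases hs : 0 < s
    · have h1 : (fun ω => f0 (ω, s)) = {ω | s < B ω}.indicator (fun _ => (1:ℝ)) := by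
        funext ω
        by_cases h : s < B ω <;> simp [hf0def, hAdef, Set.indicator_apply, hs, h]
      rw [h1, integral_indicator_const (1:ℝ) (hBsetm s), smul_eq_mul, mul_one, measureReal_def,
        Set.indicator_of_mem (Set.mem_Ioi.2 hs)]
    · have hz : ∀ ω, f0 (ω, s) = 0 := fun ω => by
        simp [hf0def, hAdef, Set.indicator_apply, hs]
      simp [hz, Set.indicator_of_notMem, hs]
  have hI1 : ∫ ω, Y ω ∂P = (∫ ω, B ω ∂P) * (∫ x, p x ∂ν) := by
    calc ∫ ω, Y ω ∂P = ∫ ω, (∫ s, f (ω, s)) ∂P := integral_congr_ae (ae_of_all _ hYf)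
      _ = ∫ s, (∫ ω, f (ω, s) ∂P) := integral_integral_swap (f := fun ω s => f (ω, s)) hfint
      _ = ∫ s, (Set.Ioi (0:ℝ)).indicator
            (fun s => (P {ω | s < B ω}).toReal * ∫ x, p x ∂ν) s :=
          integral_congr_ae (ae_of_all _ hinner1)
      _ = ∫ s, ((Set.Ioi (0:ℝ)).indicator (fun s => (P {ω | s < B ω}).toReal) s)
            * (∫ x, p x ∂ν) := by
          refine integral_congr_ae (ae_of_all _ fun s => ?_)
          by_cases hs : s ∈ Set.Ioi (0:ℝ) <;> simp [Set.indicator_apply, hs]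
      _ = (∫ s, (Set.Ioi (0:ℝ)).indicator (fun s => (P {ω | s < B ω}).toReal) s)
            * (∫ x, p x ∂ν) := integral_mul_const _ _
      _ = (∫ s, (∫ ω, f0 (ω, s) ∂P)) * (∫ x, p x ∂ν) := by
          rw [integral_congr_ae (ae_of_all _ hinner0)]
      _ = (∫ ω, B ω ∂P) * (∫ x, p x ∂ν) := by rw [← hB_rep]
  -- properties of cp
  have hcpmeas : Measurable cp := by
    have hg : Measurable fun q : ℝ × Ω => p (X 0 q.2) * p (X q.1 q.2) :=
      (hpmeas.comp ((hXt 0).comp measurable_snd)).mul (hpmeas.comp hXmeas)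
    have h1 := (hg.stronglyMeasurable).integral_prod_right' (ν := P)
    exact h1.measurable
  have hcpnn : ∀ v, 0 ≤ cp v :=
    fun v => integral_nonneg fun ω => mul_nonneg (hpnonneg _) (hpnonneg _)
  have hppint : ∀ u v : ℝ, Integrable (fun ω => p (X u ω) * p (X v ω)) P := by
    intro u v
    refine (integrable_const (C^2)).mono'
      ((hpmeas.comp (hXt u)).mul (hpmeas.comp (hXt v))).aestronglyMeasurable
      (ae_of_all _ fun ω => ?_)
    rw [Real.norm_eq_abs, abs_of_nonneg (mul_nonneg (hpnonneg _) (hpnonneg _))]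
    nlinarith [hpnonneg (X u ω), hpnonneg (X v ω), hpbdd (X u ω), hpbdd (X v ω)]
  have hcpbdd : ∀ v, cp v ≤ C ^ 2 := by
    intro v
    calc cp v ≤ ∫ _ω, C ^ 2 ∂P := by
          refine integral_mono (hppint 0 v) (integrable_const _) fun ω => ?_
          nlinarith [hpnonneg (X 0 ω), hpnonneg (X v ω), hpbdd (X 0 ω), hpbdd (X v ω)]
      _ = C ^ 2 := by simp
  -- stationarity
  have hstat : ∀ u v : ℝ, 0 < u → u ≤ v →
      ∫ ω, p (X u ω) * p (X v ω) ∂P = cp (v - u) := by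
    intro u v hu huv
    have hfm : Measurable fun y : S × S => p y.1 * p y.2 :=
      (hpmeas.comp measurable_fst).mul (hpmeas.comp measurable_snd)
    calc ∫ ω, p (X u ω) * p (X v ω) ∂P
        = ∫ y : S × S, p y.1 * p y.2 ∂(P.map (fun ω => (X u ω, X v ω))) :=
          (integral_map ((hXt u).prodMk (hXt v)).aemeasurable
            hfm.aestronglyMeasurable).symm
      _ = ∫ y : S × S, p y.1 * p y.2 ∂(P.map (fun ω => (X 0 ω, X (v - u) ω))) := by
          rw [hXstat u v hu.le huv]
      _ = ∫ ω, p (X 0 ω) * p (X (v - u) ω) ∂P :=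
          integral_map ((hXt 0).prodMk (hXt (v - u))).aemeasurable
            hfm.aestronglyMeasurable
      _ = cp (v - u) := rfl
  -- the squared integrand on the product space
  set F2 : Ω × (ℝ × ℝ) → ℝ := fun q => f (q.1, q.2.1) * f (q.1, q.2.2) with hF2def
  have hF2meas : Measurable F2 :=
    (hfmeas.comp (measurable_fst.prodMk (measurable_fst.comp measurable_snd))).mul
      (hfmeas.comp (measurable_fst.prodMk (measurable_snd.comp measurable_snd)))
  set A2 : Set (Ω × (ℝ × ℝ)) := {q | (q.1, q.2.1) ∈ A ∧ (q.1, q.2.2) ∈ A} with hA2def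
  have hA2m : MeasurableSet A2 :=
    (hAm.preimage (measurable_fst.prodMk (measurable_fst.comp measurable_snd))).inter
      (hAm.preimage (measurable_fst.prodMk (measurable_snd.comp measurable_snd)))
  have hfC : ∀ q', ‖f q'‖ ≤ C := by
    intro q'
    refine (hfb q').trans ?_
    by_cases h : q' ∈ A <;> simp [Set.indicator_apply, h, hC0]
  have hF2b : ∀ q, ‖F2 q‖ ≤ C ^ 2 * A2.indicator 1 q := by
    intro q
    by_cases h1 : (q.1, q.2.1) ∈ A
    · by_cases h2 : (q.1, q.2.2) ∈ A
      · have hq : q ∈ A2 := ⟨h1, h2⟩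
        rw [Set.indicator_of_mem hq, Pi.one_apply, mul_one, hF2def, norm_mul, pow_two]
        exact mul_le_mul (hfC _) (hfC _) (norm_nonneg _) hC0
      · have : f (q.1, q.2.2) = 0 := by rw [hfdef, Set.indicator_of_notMem h2]
        rw [hF2def]
        simp only [this, mul_zero, norm_zero]
        exact mul_nonneg (by positivity) (Set.indicator_nonneg (fun _ _ => zero_le_one) q)
    · have : f (q.1, q.2.1) = 0 := by rw [hfdef, Set.indicator_of_notMem h1]
      rw [hF2def]
      simp only [this, zero_mul, norm_zero]
      exact mul_nonneg (by positivity) (Set.indicator_nonneg (fun _ _ => zero_le_one) q)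
  have hpre2 : ∀ ω, Prod.mk ω ⁻¹' A2 = (Set.Ioo 0 (B ω)) ×ˢ (Set.Ioo 0 (B ω)) :=
    fun ω => rfl
  have hBBint : Integrable (fun ω => B ω * B ω) P := by
    refine hB2.congr ?_
    exact ae_of_all _ fun ω => by show B ω ^ 2 = B ω * B ω; ring
  have hA2fin : (P.prod (volume.prod volume)) A2 < ⊤ := by
    rw [Measure.prod_apply hA2m]
    calc ∫⁻ ω, (volume.prod volume) (Prod.mk ω ⁻¹' A2) ∂P
        = ∫⁻ ω, ENNReal.ofReal (B ω * B ω) ∂P := by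
          refine lintegral_congr fun ω => ?_
          rw [hpre2 ω, Measure.prod_prod, Real.volume_Ioo, sub_zero,
            ENNReal.ofReal_mul (hBnonneg ω)]
      _ = ENNReal.ofReal (∫ ω, B ω * B ω ∂P) :=
          (ofReal_integral_eq_lintegral_ofReal hBBint
            (ae_of_all _ fun ω => mul_nonneg (hBnonneg ω) (hBnonneg ω))).symm
      _ < ⊤ := ENNReal.ofReal_lt_top
  have hF2int : Integrable F2 (P.prod (volume.prod volume)) :=
    aux_integrable_of_le_indicator hF2meas.aestronglyMeasurable hA2m hA2fin hF2b
  -- square as a double integral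
  have hsq : ∀ ω, Y ω ^ 2 = ∫ z : ℝ × ℝ, F2 (ω, z) ∂(volume.prod volume) := by
    intro ω
    rw [hYf ω, pow_two]
    exact (integral_prod_mul (f := fun s => f (ω, s)) (g := fun s => f (ω, s))).symm
  set G : ℝ × ℝ → ℝ := fun z => ∫ ω, F2 (ω, z) ∂P with hGdef
  have hGint : Integrable G (volume.prod volume) := hF2int.integral_prod_right
  have hM2G : ∫ ω, Y ω ^ 2 ∂P = ∫ z, G z ∂(volume.prod volume) := by
    calc ∫ ω, Y ω ^ 2 ∂P
        = ∫ ω, (∫ z : ℝ × ℝ, F2 (ω, z) ∂(volume.prod volume)) ∂P :=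
          integral_congr_ae (ae_of_all _ hsq)
      _ = ∫ z, G z ∂(volume.prod volume) :=
          integral_integral_swap (f := fun ω z => F2 (ω, z)) hF2int
  -- symmetrization
  set D : Set (ℝ × ℝ) := {z | z.1 < z.2} with hDdef
  have hDm : MeasurableSet D := measurableSet_lt measurable_fst measurable_snd
  have hsplit : ∫ z, G z ∂(volume.prod volume) = 2 * ∫ z in D, G z ∂(volume.prod volume) := by
    have hdiag : (volume.prod volume) {z : ℝ × ℝ | z.1 = z.2} = 0 := by
      rw [Measure.prod_apply (measurableSet_eq_fun measurable_fst measurable_snd)]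
      have hsing : ∀ x : ℝ, (Prod.mk x ⁻¹' {z : ℝ × ℝ | z.1 = z.2}) = {x} := by
        intro x; ext y; simp [eq_comm]
      simp [hsing]
    have hcompl : ∫ z in Dᶜ, G z ∂(volume.prod volume)
        = ∫ z in {z : ℝ × ℝ | z.2 < z.1}, G z ∂(volume.prod volume) := by
      refine setIntegral_congr_set ?_
      rw [MeasureTheory.ae_eq_set]
      constructor
      · refine measure_mono_null ?_ hdiag
        intro z hz
        simp only [Set.mem_diff, Set.mem_compl_iff, hDdef, Set.mem_setOf_eq, not_lt] at hz
        exact le_antisymm hz.2 hz.1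
      · refine measure_mono_null ?_ (measure_empty)
        intro z hz
        simp only [Set.mem_diff, Set.mem_compl_iff, hDdef, Set.mem_setOf_eq, not_lt,
          not_le] at hz
        exact absurd hz.2 (not_lt.2 hz.1.le)
    have hswapD : ∫ z in {z : ℝ × ℝ | z.2 < z.1}, G z ∂(volume.prod volume)
        = ∫ z in D, G z ∂(volume.prod volume) := by
      have hmp : MeasurePreserving (Prod.swap : ℝ × ℝ → ℝ × ℝ)
          (volume.prod volume) (volume.prod volume) := Measure.measurePreserving_swap
      have hemb : MeasurableEmbedding (Prod.swap : ℝ × ℝ → ℝ × ℝ) :=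
        MeasurableEquiv.prodComm.measurableEmbedding
      have h1 := hmp.setIntegral_preimage_emb hemb G D
      have h2 : Prod.swap ⁻¹' D = {z : ℝ × ℝ | z.2 < z.1} := rfl
      have h3 : ∀ z : ℝ × ℝ, G (Prod.swap z) = G z := by
        intro z
        refine integral_congr_ae (ae_of_all _ fun ω => ?_)
        rw [hF2def]
        exact mul_comm _ _
      rw [h2] at h1
      rw [← h1]
      exact setIntegral_congr_fun (measurableSet_lt measurable_snd measurable_fst)
        fun z _ => (h3 z).symm
    rw [← integral_add_compl hDm hGint, hcompl, hswapD]
    ring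
  -- evaluation of G on the triangle
  set G' : ℝ × ℝ → ℝ := fun z =>
      if 0 < z.1 then (P {ω | z.2 < B ω}).toReal * cp (z.2 - z.1) else 0 with hG'def
  have hGont : ∀ z : ℝ × ℝ, z ∈ D → G z = G' z := by
    intro z hz
    have hzlt : z.1 < z.2 := hz
    by_cases hu : 0 < z.1
    · have hfs2 : (fun ω => F2 (ω, z))
          = fun ω => (Set.Ioi z.2).indicator (fun _ => (1:ℝ)) (B ω)
              * (fun φ : ℝ → S => p (φ z.1) * p (φ z.2)) (fun t => X t ω) := by
        funext ω
        by_cases h : z.2 < B ω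
        · have h1 : (ω, z.1) ∈ A := ⟨hu, lt_trans hzlt h⟩
          have h2 : (ω, z.2) ∈ A := ⟨lt_trans hu hzlt, h⟩
          rw [hF2def]
          simp [hfdef, Set.indicator_of_mem h1, Set.indicator_of_mem h2,
            Set.indicator_apply, h]
        · have h2 : (ω, z.2) ∉ A := fun hc => h hc.2
          rw [hF2def]
          simp [hfdef, Set.indicator_of_notMem h2, Set.indicator_apply, h]
      have hmeas2 : Measurable fun φ : ℝ → S => p (φ z.1) * p (φ z.2) :=
        (hpmeas.comp (measurable_pi_apply z.1)).mul (hpmeas.comp (measurable_pi_apply z.2))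
      calc G z = ∫ ω, (Set.Ioi z.2).indicator (fun _ => (1:ℝ)) (B ω)
            * (fun φ : ℝ → S => p (φ z.1) * p (φ z.2)) (fun t => X t ω) ∂P :=
            integral_congr_ae (ae_of_all _ fun ω => congrFun hfs2 ω)
        _ = (P {ω | z.2 < B ω}).toReal
              * ∫ ω, (fun φ : ℝ → S => p (φ z.1) * p (φ z.2)) (fun t => X t ω) ∂P :=
            hmul z.2 _ hmeas2 (fun φ => mul_nonneg (hpnonneg _) (hpnonneg _))
        _ = (P {ω | z.2 < B ω}).toReal * cp (z.2 - z.1) := by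
            rw [show (∫ ω, (fun φ : ℝ → S => p (φ z.1) * p (φ z.2)) (fun t => X t ω) ∂P)
              = ∫ ω, p (X z.1 ω) * p (X z.2 ω) ∂P from rfl, hstat z.1 z.2 hu hzlt.le]
        _ = G' z := by simp only [hG'def]; rw [if_pos hu]
    · have hz0 : ∀ ω, F2 (ω, z) = 0 := by
        intro ω
        have h1 : (ω, z.1) ∉ A := fun hc => hu hc.1
        rw [hF2def]
        simp [hfdef, Set.indicator_of_notMem h1]
      have hGz : G z = 0 := by
        have : G z = ∫ _ω, (0:ℝ) ∂P := integral_congr_ae (ae_of_all _ hz0)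
        simpa using this
      rw [hGz]
      simp only [hG'def]
      rw [if_neg hu]
  have hindeq2 : D.indicator G = D.indicator G' := by
    funext z
    by_cases h : z ∈ D
    · rw [Set.indicator_of_mem h, Set.indicator_of_mem h, hGont z h]
    · rw [Set.indicator_of_notMem h, Set.indicator_of_notMem h]
  have hG'Dint : Integrable (D.indicator G') (volume.prod volume) := by
    rw [← hindeq2]
    exact hGint.indicator hDm
  -- compute the triangle integral as an iterated integral
  have htri : ∫ z in D, G z ∂(volume.prod volume)
      = ∫ v, (P {ω | v < B ω}).toReal * ∫ u, (Set.Ioo (0:ℝ) v).indicator cp u := by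
    have hinnerD : ∀ v : ℝ, (∫ u, D.indicator G' (u, v))
        = (P {ω | v < B ω}).toReal * ∫ u, (Set.Ioo (0:ℝ) v).indicator cp u := by
      intro v
      have h1 : (fun u => D.indicator G' (u, v))
          = fun u => (P {ω | v < B ω}).toReal
              * (Set.Ioo (0:ℝ) v).indicator (fun u => cp (v - u)) u := by
        funext u
        by_cases hu : u ∈ Set.Ioo (0:ℝ) v
        · have hD2 : (u, v) ∈ D := hu.2
          rw [Set.indicator_of_mem hD2, Set.indicator_of_mem hu]
          simp only [hG'def]
          rw [if_pos hu.1]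
        · by_cases hD2 : (u, v) ∈ D
          · have hu0 : ¬ (0:ℝ) < u := fun h => hu ⟨h, hD2⟩
            rw [Set.indicator_of_mem hD2, Set.indicator_of_notMem hu]
            simp only [hG'def]
            rw [if_neg hu0]
            ring
          · rw [Set.indicator_of_notMem hD2, Set.indicator_of_notMem hu]
            ring
      rw [h1, integral_const_mul]
      congr 1
      by_cases hv : 0 < v
      · rw [integral_indicator measurableSet_Ioo, integral_indicator measurableSet_Ioo,
          ← integral_Ioc_eq_integral_Ioo, ← integral_Ioc_eq_integral_Ioo,
          ← intervalIntegral.integral_of_le hv.le, ← intervalIntegral.integral_of_le hv.le,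
          intervalIntegral.integral_comp_sub_left cp v, sub_self, sub_zero]
      · have he : Set.Ioo (0:ℝ) v = ∅ := Set.Ioo_eq_empty hv
        simp [he]
    calc ∫ z in D, G z ∂(volume.prod volume)
        = ∫ z in D, G' z ∂(volume.prod volume) := setIntegral_congr_fun hDm hGont
      _ = ∫ z, D.indicator G' z ∂(volume.prod volume) :=
          (integral_indicator hDm).symm
      _ = ∫ v, ∫ u, D.indicator G' (u, v) :=
          integral_prod_symm (D.indicator G') hG'Dint
      _ = ∫ v, (P {ω | v < B ω}).toReal * ∫ u, (Set.Ioo (0:ℝ) v).indicator cp u :=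
          integral_congr_ae (ae_of_all _ hinnerD)
  -- the T-side integrand
  set A3 : Set (Ω × (ℝ × ℝ)) := {q | (0 < q.2.1 ∧ q.2.1 < q.2.2) ∧ q.2.2 < B q.1} with hA3def
  have hA3m : MeasurableSet A3 :=
    ((measurableSet_lt measurable_const (measurable_fst.comp measurable_snd)).inter
      (measurableSet_lt (measurable_fst.comp measurable_snd)
        (measurable_snd.comp measurable_snd))).inter
      (measurableSet_lt (measurable_snd.comp measurable_snd) (hBmeas.comp measurable_fst))
  set K : Ω × (ℝ × ℝ) → ℝ := A3.indicator (fun q => cp q.2.1) with hKdef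
  have hKmeas : Measurable K :=
    (hcpmeas.comp (measurable_fst.comp measurable_snd)).indicator hA3m
  have hA3subA2 : A3 ⊆ A2 := by
    intro q hq
    exact ⟨⟨hq.1.1, lt_trans hq.1.2 hq.2⟩, ⟨lt_trans hq.1.1 hq.1.2, hq.2⟩⟩
  have hKb : ∀ q, ‖K q‖ ≤ C ^ 2 * A2.indicator 1 q := by
    intro q
    by_cases h : q ∈ A3
    · rw [hKdef, Set.indicator_of_mem h, Set.indicator_of_mem (hA3subA2 h), Pi.one_apply,
        mul_one, Real.norm_eq_abs, abs_of_nonneg (hcpnn _)]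
      exact hcpbdd _
    · rw [hKdef, Set.indicator_of_notMem h, norm_zero]
      exact mul_nonneg (by positivity) (Set.indicator_nonneg (fun _ _ => zero_le_one) q)
  have hKint : Integrable K (P.prod (volume.prod volume)) :=
    aux_integrable_of_le_indicator hKmeas.aestronglyMeasurable hA2m hA2fin hKb
  have hTinner : ∀ ω, (∫ v in (0:ℝ)..(B ω), (B ω - v) * cp v)
      = ∫ z : ℝ × ℝ, K (ω, z) ∂(volume.prod volume) := by
    intro ω
    have hKωb : ∀ z : ℝ × ℝ, ‖K (ω, z)‖
        ≤ C ^ 2 * ((Set.Ioo 0 (B ω) ×ˢ Set.Ioo 0 (B ω)).indicator 1 z) := by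
      intro z
      have h0 := hKb (ω, z)
      have heq : A2.indicator (1 : Ω × (ℝ × ℝ) → ℝ) (ω, z)
          = (Set.Ioo 0 (B ω) ×ˢ Set.Ioo 0 (B ω)).indicator 1 z := by
        by_cases h : (ω, z) ∈ A2
        · rw [Set.indicator_of_mem h, Set.indicator_of_mem (by rw [← hpre2 ω]; exact h)]
          rfl
        · rw [Set.indicator_of_notMem h,
            Set.indicator_of_notMem (by rw [← hpre2 ω]; exact h)]
      rwa [heq] at h0
    have hKωmeas : Measurable fun z : ℝ × ℝ => K (ω, z) :=
      hKmeas.comp (measurable_const.prodMk measurable_id)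
    have hSfin : (volume.prod volume) (Set.Ioo 0 (B ω) ×ˢ Set.Ioo (0:ℝ) (B ω)) < ⊤ := by
      rw [Measure.prod_prod, Real.volume_Ioo, sub_zero, ← ENNReal.ofReal_mul (hBnonneg ω)]
      exact ENNReal.ofReal_lt_top
    have hKωint : Integrable (fun z => K (ω, z)) (volume.prod volume) :=
      aux_integrable_of_le_indicator hKωmeas.aestronglyMeasurable
        (measurableSet_Ioo.prod measurableSet_Ioo) hSfin hKωb
    have hw : ∀ v : ℝ, (∫ w, K (ω, (v, w)))
        = (Set.Ioo 0 (B ω)).indicator (fun v => (B ω - v) * cp v) v := by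
      intro v
      by_cases hv : v ∈ Set.Ioo 0 (B ω)
      · have h1 : (fun w => K (ω, (v, w)))
            = fun w => cp v * (Set.Ioo v (B ω)).indicator (fun _ => (1:ℝ)) w := by
          funext w
          by_cases hw2 : w ∈ Set.Ioo v (B ω)
          · have hm3 : (ω, (v, w)) ∈ A3 := ⟨⟨hv.1, hw2.1⟩, hw2.2⟩
            rw [hKdef, Set.indicator_of_mem hm3, Set.indicator_of_mem hw2, mul_one]
          · have hm3 : (ω, (v, w)) ∉ A3 := fun hc => hw2 ⟨hc.1.2, hc.2⟩
            rw [hKdef, Set.indicator_of_notMem hm3, Set.indicator_of_notMem hw2, mul_zero]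
        rw [h1, integral_const_mul, integral_indicator_const (1:ℝ) measurableSet_Ioo,
          smul_eq_mul, mul_one, measureReal_def, Real.volume_Ioo,
          ENNReal.toReal_ofReal (sub_nonneg.2 hv.2.le), Set.indicator_of_mem hv]
        ring
      · have h1 : ∀ w, K (ω, (v, w)) = 0 := by
          intro w
          have hm3 : (ω, (v, w)) ∉ A3 := by
            intro hc
            rcases hc with ⟨⟨h01, hvw⟩, hwB⟩
            exact hv ⟨h01, lt_trans hvw hwB⟩
          rw [hKdef, Set.indicator_of_notMem hm3]
        rw [Set.indicator_of_notMem hv]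
        simp [h1]
    calc (∫ v in (0:ℝ)..(B ω), (B ω - v) * cp v)
        = ∫ v, (Set.Ioo 0 (B ω)).indicator (fun v => (B ω - v) * cp v) v := by
          rw [intervalIntegral.integral_of_le (hBnonneg ω), integral_Ioc_eq_integral_Ioo,
            ← integral_indicator measurableSet_Ioo]
      _ = ∫ v, ∫ w, K (ω, (v, w)) := (integral_congr_ae (ae_of_all _ hw)).symm
      _ = ∫ z : ℝ × ℝ, K (ω, z) ∂(volume.prod volume) :=
          (integral_prod (fun z => K (ω, z)) hKωint).symm
  have hKswap : T = ∫ z : ℝ × ℝ, (∫ ω, K (ω, z) ∂P) ∂(volume.prod volume) := by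
    calc T = ∫ ω, (∫ z : ℝ × ℝ, K (ω, z) ∂(volume.prod volume)) ∂P :=
          integral_congr_ae (ae_of_all _ hTinner)
      _ = _ := integral_integral_swap (f := fun ω z => K (ω, z)) hKint
  set KI : ℝ × ℝ → ℝ := fun z =>
      if 0 < z.1 ∧ z.1 < z.2 then (P {ω | z.2 < B ω}).toReal * cp z.1 else 0 with hKIdef
  have hKinner : ∀ z : ℝ × ℝ, (∫ ω, K (ω, z) ∂P) = KI z := by
    intro z
    by_cases hz : 0 < z.1 ∧ z.1 < z.2
    · have h1 : (fun ω => K (ω, z))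
          = fun ω => {ω | z.2 < B ω}.indicator (fun _ => cp z.1) ω := by
        funext ω
        by_cases h : z.2 < B ω
        · rw [hKdef, Set.indicator_of_mem (show (ω, z) ∈ A3 from ⟨hz, h⟩),
            Set.indicator_of_mem (show ω ∈ {ω | z.2 < B ω} from h)]
        · rw [hKdef, Set.indicator_of_notMem (fun hc => h hc.2),
            Set.indicator_of_notMem (show ω ∉ {ω | z.2 < B ω} from h)]
      rw [h1, integral_indicator_const (cp z.1) (hBsetm z.2), smul_eq_mul, measureReal_def]
      simp only [hKIdef]
      rw [if_pos hz]
    · have h1 : ∀ ω, K (ω, z) = 0 := by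
        intro ω
        rw [hKdef, Set.indicator_of_notMem (fun hc => hz hc.1)]
      simp only [hKIdef]
      rw [if_neg hz]
      simp [h1]
  have hKIint : Integrable KI (volume.prod volume) :=
    hKint.integral_prod_right.congr (ae_of_all _ fun z => hKinner z)
  have hTfinal : T = ∫ v, (P {ω | v < B ω}).toReal * ∫ u, (Set.Ioo (0:ℝ) v).indicator cp u := by
    have hinner2 : ∀ w : ℝ, (∫ v, KI (v, w))
        = (P {ω | w < B ω}).toReal * ∫ u, (Set.Ioo (0:ℝ) w).indicator cp u := by
      intro w
      have h1 : (fun v => KI (v, w))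
          = fun v => (P {ω | w < B ω}).toReal * (Set.Ioo (0:ℝ) w).indicator cp v := by
        funext v
        by_cases hv : v ∈ Set.Ioo (0:ℝ) w
        · simp only [hKIdef]
          rw [if_pos (show (0:ℝ) < v ∧ v < w from ⟨hv.1, hv.2⟩), Set.indicator_of_mem hv]
        · simp only [hKIdef]
          rw [if_neg (fun hc => hv ⟨hc.1, hc.2⟩), Set.indicator_of_notMem hv, mul_zero]
      rw [h1, integral_const_mul]
    calc T = ∫ z : ℝ × ℝ, (∫ ω, K (ω, z) ∂P) ∂(volume.prod volume) := hKswap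
      _ = ∫ z : ℝ × ℝ, KI z ∂(volume.prod volume) := integral_congr_ae (ae_of_all _ hKinner)
      _ = ∫ w, ∫ v, KI (v, w) := integral_prod_symm KI hKIint
      _ = _ := integral_congr_ae (ae_of_all _ hinner2)
  have hI2 : ∫ ω, Y ω ^ 2 ∂P = 2 * T := by
    rw [hM2G, hsplit, htri, hTfinal]
  -- dominated convergence
  have hJ : Tendsto (fun ε => ∫ ω, Y ω ^ 2 * min (ε * Y ω) 1 ∂P) (𝓝[>] (0:ℝ)) (𝓝 0) := by
    have h0 : Tendsto (fun ε => ∫ ω, Y ω ^ 2 * min (ε * Y ω) 1 ∂P) (𝓝[>] (0:ℝ))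
        (𝓝 (∫ ω, (0:ℝ) ∂P)) := by
      refine tendsto_integral_filter_of_dominated_convergence (fun ω => Y ω ^ 2) ?_ ?_ hY2int ?_
      · filter_upwards with ε
        exact ((hYmeas.pow_const 2).mul
          ((hYmeas.const_mul ε).min measurable_const)).aestronglyMeasurable
      · filter_upwards [self_mem_nhdsWithin] with ε hε
        simp only [Set.mem_Ioi] at hε
        refine ae_of_all _ fun ω => ?_
        have h1 : 0 ≤ min (ε * Y ω) 1 := le_min (mul_nonneg hε.le (hYnn ω)) one_pos.le
        have h2 : min (ε * Y ω) 1 ≤ 1 := min_le_right _ _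
        rw [Real.norm_eq_abs, abs_of_nonneg (mul_nonneg (sq_nonneg _) h1)]
        nlinarith [sq_nonneg (Y ω)]
      · refine ae_of_all _ fun ω => ?_
        have hcont : Continuous fun ε : ℝ => Y ω ^ 2 * min (ε * Y ω) 1 :=
          continuous_const.mul ((continuous_id.mul continuous_const).min continuous_const)
        have h := hcont.tendsto 0
        have hval : Y ω ^ 2 * min ((0:ℝ) * Y ω) 1 = 0 := by simp
        rw [hval] at h
        exact h.mono_left nhdsWithin_le_nhds
    simpa using h0
  rw [Asymptotics.isLittleO_iff]
  intro c hc
  filter_upwards [hJ.eventually_le_const hc, self_mem_nhdsWithin] with ε hJε hε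
  simp only [Set.mem_Ioi] at hε
  have hexpmeas : Measurable fun ω => 1 - Real.exp (-ε * Y ω) :=
    measurable_const.sub (hYmeas.const_mul (-ε)).exp
  have hexpint : Integrable (fun ω => 1 - Real.exp (-ε * Y ω)) P := by
    refine (integrable_const (1:ℝ)).mono' hexpmeas.aestronglyMeasurable
      (ae_of_all _ fun ω => ?_)
    have h1 : (0:ℝ) < Real.exp (-ε * Y ω) := Real.exp_pos _
    have h2 : Real.exp (-ε * Y ω) ≤ 1 := by
      rw [← Real.exp_zero]
      exact Real.exp_le_exp.2 (by nlinarith [hYnn ω])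
    rw [Real.norm_eq_abs, abs_le]
    constructor <;> nlinarith
  have key : (∫ ω, (1 - Real.exp (-ε * Y ω)) ∂P)
      - (ε * (∫ ω, B ω ∂P) * (∫ x, p x ∂ν) - ε ^ 2 * T)
      = ∫ ω, ((1 - Real.exp (-ε * Y ω)) - (ε * Y ω - ε ^ 2 * Y ω ^ 2 / 2)) ∂P := by
    have hga : Integrable (fun ω => ε * Y ω) P := hYint.const_mul ε
    have hgb : Integrable (fun ω => ε ^ 2 * Y ω ^ 2 / 2) P :=
      (hY2int.const_mul (ε^2)).div_const 2
    have hg : Integrable (fun ω => ε * Y ω - ε ^ 2 * Y ω ^ 2 / 2) P := hga.sub hgb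
    rw [integral_sub hexpint hg, integral_sub hga hgb, integral_const_mul, integral_div,
      integral_const_mul, hI1, hI2]
    ring
  rw [key]
  have hgint : Integrable (fun ω => ε ^ 2 * (Y ω ^ 2 * min (ε * Y ω) 1)) P := by
    refine (hY2int.const_mul (ε^2)).mono'
      (measurable_const.mul ((hYmeas.pow_const 2).mul
        ((hYmeas.const_mul ε).min measurable_const))).aestronglyMeasurable
      (ae_of_all _ fun ω => ?_)
    have h1 : 0 ≤ min (ε * Y ω) 1 := le_min (mul_nonneg hε.le (hYnn ω)) one_pos.le
    have h2 : min (ε * Y ω) 1 ≤ 1 := min_le_right _ _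
    rw [Real.norm_eq_abs, abs_of_nonneg (by positivity)]
    nlinarith [mul_nonneg (mul_nonneg (sq_nonneg ε) (sq_nonneg (Y ω))) (sub_nonneg.2 h2)]
  have hnorm : ‖∫ ω, ((1 - Real.exp (-ε * Y ω)) - (ε * Y ω - ε ^ 2 * Y ω ^ 2 / 2)) ∂P‖
      ≤ ∫ ω, ε ^ 2 * (Y ω ^ 2 * min (ε * Y ω) 1) ∂P := by
    refine norm_integral_le_of_norm_le hgint (ae_of_all _ fun ω => ?_)
    have h := aux_exp_taylor (mul_nonneg hε.le (hYnn ω))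
    have heq : (1 - Real.exp (-ε * Y ω)) - (ε * Y ω - ε ^ 2 * Y ω ^ 2 / 2)
        = -(Real.exp (-(ε * Y ω)) - (1 - ε * Y ω + (ε * Y ω) ^ 2 / 2)) := by
      rw [neg_mul]; ring
    rw [Real.norm_eq_abs, heq, abs_neg]
    calc |Real.exp (-(ε * Y ω)) - (1 - ε * Y ω + (ε * Y ω) ^ 2 / 2)|
        ≤ (ε * Y ω) ^ 2 * min (ε * Y ω) 1 := h
      _ = ε ^ 2 * (Y ω ^ 2 * min (ε * Y ω) 1) := by ring
  refine hnorm.trans ?_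
  rw [integral_const_mul]
  have : ε ^ 2 * ∫ ω, Y ω ^ 2 * min (ε * Y ω) 1 ∂P ≤ ε ^ 2 * c :=
    mul_le_mul_of_nonneg_left hJε (sq_nonneg ε)
  refine this.trans ?_
  rw [Real.norm_eq_abs, abs_of_nonneg (sq_nonneg ε)]
  ring_nf
  exact le_refl _
end

section
/- Let p : S → [0,∞) be bounded measurable and let B be a nonnegative random variable with E[B^2] < ∞, independent of the process X. Then lim_{ε → 0+} E[∫_0^B p(X(u)) exp(−ε ∫_0^u p(X(s)) ds) (B − u) du] = (∫_S p dν) · E[B^2]/2. -/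
open MeasureTheory ProbabilityTheory Filter Topology
open scoped ENNReal

/-- Strong measurability of a parametrized interval integral. -/
lemma aux_sm_stmt10 {Ω : Type*} [MeasurableSpace Ω] {g : ℝ → Ω → ℝ}
    (hg : Measurable fun q : ℝ × Ω => g q.1 q.2) :
    StronglyMeasurable fun q : ℝ × Ω => ∫ s in (0:ℝ)..q.1, g s q.2 := by
  have h1 : ∀ q : ℝ × Ω, (∫ s in (0:ℝ)..q.1, g s q.2)
      = (∫ s, (Set.Ioc (0:ℝ) q.1).indicator (fun s => g s q.2) s)
        - ∫ s, (Set.Ioc q.1 (0:ℝ)).indicator (fun s => g s q.2) s := by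
    intro q
    rw [intervalIntegral, integral_indicator measurableSet_Ioc,
      integral_indicator measurableSet_Ioc]
  simp_rw [h1]
  have key : ∀ c : ℝ × Ω → ℝ, Measurable c →
      StronglyMeasurable fun q : ℝ × Ω =>
        ∫ s, (Set.Ioc (c q) q.1).indicator (fun s => g s q.2) s := by
    intro c hc
    have hF : StronglyMeasurable fun z : (ℝ × Ω) × ℝ =>
        (Set.Ioc (c z.1) z.1.1).indicator (fun s => g s z.1.2) z.2 := by
      apply Measurable.stronglyMeasurable
      simp_rw [Set.indicator_apply, Set.mem_Ioc]
      exact Measurable.ite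
        (((measurableSet_lt (hc.comp measurable_fst) measurable_snd)).inter
          (measurableSet_le measurable_snd measurable_fst.fst))
        (hg.comp (measurable_snd.prodMk measurable_fst.snd)) measurable_const
    exact hF.integral_prod_right'
  have k1 := key (fun _ => (0:ℝ)) measurable_const
  have hswap : StronglyMeasurable fun q : ℝ × Ω =>
      ∫ s, (Set.Ioc q.1 (0:ℝ)).indicator (fun s => g s q.2) s := by
    have hF : StronglyMeasurable fun z : (ℝ × Ω) × ℝ =>
        (Set.Ioc z.1.1 (0:ℝ)).indicator (fun s => g s z.1.2) z.2 := by
      apply Measurable.stronglyMeasurable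
      simp_rw [Set.indicator_apply, Set.mem_Ioc]
      exact Measurable.ite
        ((measurableSet_lt measurable_fst.fst measurable_snd).inter
          (measurableSet_le measurable_snd measurable_const))
        (hg.comp (measurable_snd.prodMk measurable_fst.snd)) measurable_const
    exact hF.integral_prod_right'
  exact k1.sub hswap

/-- Section measurability helper. -/
lemma aux_sec_stmt10 {Ω : Type*} [MeasurableSpace Ω] {g : ℝ → Ω → ℝ}
    (hg : Measurable fun q : ℝ × Ω => g q.1 q.2) (ω : Ω) :
    Measurable fun u : ℝ => g u ω := by
  have h := hg.comp (f := fun u : ℝ => (u, ω)) (measurable_id.prodMk measurable_const)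
  simpa only [Function.comp_def] using h

/-- `∫_0^∞ (b-u)^+ du = b^2/2` for `b ≥ 0`, in `ℝ≥0∞` form. -/
lemma aux_halfsq_stmt10 (b : ℝ) (hb : 0 ≤ b) :
    ∫⁻ u in Set.Ioi (0:ℝ), ENNReal.ofReal (b - u) = ENNReal.ofReal (b ^ 2 / 2) := by
  rw [← Set.Ioc_union_Ioi_eq_Ioi hb,
    lintegral_union measurableSet_Ioi Set.Ioc_disjoint_Ioi_same]
  have h2 : ∫⁻ u in Set.Ioi b, ENNReal.ofReal (b - u) = 0 := by
    rw [setLIntegral_congr_fun measurableSet_Ioi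
      (show Set.EqOn (fun u => ENNReal.ofReal (b - u)) (fun _ => (0:ℝ≥0∞)) (Set.Ioi b) from
        fun u (hu : u ∈ Set.Ioi b) => by
        show ENNReal.ofReal (b - u) = 0
        rw [ENNReal.ofReal_eq_zero.2 (by linarith [Set.mem_Ioi.1 hu] : b - u ≤ 0)])]
    simp
  have h1 : ∫⁻ u in Set.Ioc 0 b, ENNReal.ofReal (b - u)
      = ENNReal.ofReal (∫ u in Set.Ioc (0:ℝ) b, (b - u)) := by
    rw [ofReal_integral_eq_lintegral_ofReal]
    · exact (continuous_const.sub continuous_id).integrableOn_Ioc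
    · filter_upwards [ae_restrict_mem measurableSet_Ioc] with u hu
      simp only [Pi.zero_apply]
      linarith [hu.2]
  have h3 : (∫ u in Set.Ioc (0:ℝ) b, (b - u)) = b ^ 2 / 2 := by
    rw [← intervalIntegral.integral_of_le hb,
      intervalIntegral.integral_sub intervalIntegrable_const
        (continuous_id'.intervalIntegrable _ _),
      intervalIntegral.integral_const, integral_id, smul_eq_mul]
    ring
  rw [h2, h1, h3, add_zero]

set_option maxHeartbeats 1600000 in
/-- Let `p : S → [0,∞)` be bounded measurable and let `B` be a nonnegative random variable with
`E[B^2] < ∞`, independent of the process `X`. Then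
`lim_{ε → 0+} E[∫_0^B p(X(u)) exp(−ε ∫_0^u p(X(s)) ds) (B − u) du] = (∫_S p dν) ⬝ E[B^2]/2`. -/
theorem stmt_10 {Ω S : Type*} [MeasurableSpace Ω] [MeasurableSpace S]
    (P : Measure Ω) [IsProbabilityMeasure P]
    (ν : Measure S) [IsProbabilityMeasure ν]
    (X : ℝ → Ω → S) (hXmeas : Measurable fun q : ℝ × Ω => X q.1 q.2)
    (hXlaw : ∀ t : ℝ, 0 ≤ t → P.map (X t) = ν)
    (p : S → ℝ) (hpmeas : Measurable p) (hpnonneg : ∀ x, 0 ≤ p x)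
    (C : ℝ) (hpbdd : ∀ x, p x ≤ C)
    (B : Ω → ℝ) (hBmeas : Measurable B) (hBnonneg : ∀ ω, 0 ≤ B ω)
    (hB2 : Integrable (fun ω => B ω ^ 2) P)
    (hindep : Indep (MeasurableSpace.comap B inferInstance)
      (MeasurableSpace.comap (fun ω (t : ℝ) => X t ω) MeasurableSpace.pi) P) :
    Tendsto (fun ε : ℝ =>
        ∫ ω, (∫ u in (0 : ℝ)..(B ω),
          p (X u ω) * Real.exp (-ε * ∫ s in (0 : ℝ)..u, p (X s ω)) * (B ω - u)) ∂P)
      (𝓝[>] (0 : ℝ)) (𝓝 ((∫ x, p x ∂ν) * (∫ ω, B ω ^ 2 ∂P) / 2)) := by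
  classical
  -- basic measurability facts
  have hXum : ∀ u : ℝ, Measurable (X u) := fun u =>
    hXmeas.comp (measurable_const.prodMk measurable_id)
  have hpXm : Measurable fun q : ℝ × Ω => p (X q.1 q.2) := hpmeas.comp hXmeas
  have hC0 : 0 ≤ C := by
    have hS : Nonempty S := by
      by_contra h
      have h0 : (Set.univ : Set S) = ∅ := Set.univ_eq_empty_iff.2 (not_nonempty_iff.1 h)
      have h1 : ν Set.univ = 1 := measure_univ
      rw [h0] at h1
      simp at h1
    exact (hpnonneg (Classical.arbitrary S)).trans (hpbdd (Classical.arbitrary S))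
  -- the limit function
  set G : Ω → ℝ := fun ω => ∫ u in (0:ℝ)..(B ω), p (X u ω) * (B ω - u) with hGdef
  have hGjm : Measurable fun q : ℝ × Ω => p (X q.1 q.2) * (B q.2 - q.1) :=
    hpXm.mul ((hBmeas.comp measurable_snd).sub measurable_fst)
  have hGm : Measurable G := by
    have h2 : Measurable fun ω : Ω => (B ω, ω) := hBmeas.prodMk measurable_id
    have h3 := ((aux_sm_stmt10 (g := fun u ω => p (X u ω) * (B ω - u)) hGjm).measurable).comp h2
    simp only [Function.comp_def] at h3
    exact h3
  have hGnn : ∀ ω, 0 ≤ G ω := fun ω =>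
    intervalIntegral.integral_nonneg (hBnonneg ω) fun u hu =>
      mul_nonneg (hpnonneg _) (by linarith [hu.2])
  -- the inner "clock" integral
  have hIjm : Measurable fun q : ℝ × Ω => ∫ s in (0:ℝ)..q.1, p (X s q.2) :=
    (aux_sm_stmt10 (g := fun s ω => p (X s ω)) hpXm).measurable
  have hI0 : ∀ ω u, 0 ≤ u → 0 ≤ ∫ s in (0:ℝ)..u, p (X s ω) := fun ω u hu =>
    intervalIntegral.integral_nonneg hu fun s _ => hpnonneg _
  ------------------------------------------------------------------
  -- KEY IDENTITY : ∫ G dP = (∫ p dν) * (∫ B² dP) / 2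
  ------------------------------------------------------------------
  set ψ : ℝ × Ω → ℝ≥0∞ := fun q =>
    ENNReal.ofReal (p (X q.1 q.2)) * ENNReal.ofReal (B q.2 - q.1) with hψdef
  have hψm : Measurable ψ :=
    (ENNReal.measurable_ofReal.comp hpXm).mul
      (ENNReal.measurable_ofReal.comp ((hBmeas.comp measurable_snd).sub measurable_fst))
  set K : ℝ≥0∞ := ∫⁻ x, ENNReal.ofReal (p x) ∂ν with hKdef
  set M : ℝ≥0∞ := ∫⁻ ω, ENNReal.ofReal (B ω ^ 2 / 2) ∂P with hMdef
  have step1 : ∀ ω, ENNReal.ofReal (G ω) = ∫⁻ u in Set.Ioi (0:ℝ), ψ (u, ω) := by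
    intro ω
    have hb := hBnonneg ω
    have e1 : ∫⁻ u in Set.Ioi (0:ℝ), ψ (u, ω)
        = (∫⁻ u in Set.Ioc 0 (B ω), ψ (u, ω)) + ∫⁻ u in Set.Ioi (B ω), ψ (u, ω) := by
      rw [← lintegral_union measurableSet_Ioi Set.Ioc_disjoint_Ioi_same,
        Set.Ioc_union_Ioi_eq_Ioi hb]
    have e2 : ∫⁻ u in Set.Ioi (B ω), ψ (u, ω) = 0 := by
      have hz : ∀ u ∈ Set.Ioi (B ω), ψ (u, ω) = (fun _ : ℝ => (0 : ℝ≥0∞)) u := by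
        intro u hu
        show ENNReal.ofReal (p (X u ω)) * ENNReal.ofReal (B ω - u) = 0
        rw [ENNReal.ofReal_eq_zero.2 (by linarith [Set.mem_Ioi.1 hu] : B ω - u ≤ 0), mul_zero]
      calc ∫⁻ u in Set.Ioi (B ω), ψ (u, ω)
          = ∫⁻ _ in Set.Ioi (B ω), (0 : ℝ≥0∞) :=
            setLIntegral_congr_fun measurableSet_Ioi hz
        _ = 0 := lintegral_zero
    have e3 : ∫⁻ u in Set.Ioc 0 (B ω), ψ (u, ω)
        = ∫⁻ u in Set.Ioc 0 (B ω), ENNReal.ofReal (p (X u ω) * (B ω - u)) :=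
      setLIntegral_congr_fun measurableSet_Ioc
        (fun u _ => by
          show ENNReal.ofReal (p (X u ω)) * ENNReal.ofReal (B ω - u)
            = ENNReal.ofReal (p (X u ω) * (B ω - u))
          rw [ENNReal.ofReal_mul (hpnonneg _)])
    have hsecm : Measurable fun u : ℝ => p (X u ω) * (B ω - u) :=
      aux_sec_stmt10 (g := fun u ω => p (X u ω) * (B ω - u)) hGjm ω
    have e4 : ENNReal.ofReal (G ω)
        = ∫⁻ u in Set.Ioc 0 (B ω), ENNReal.ofReal (p (X u ω) * (B ω - u)) := by
      rw [hGdef]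
      simp only []
      rw [intervalIntegral.integral_of_le hb]
      apply ofReal_integral_eq_lintegral_ofReal
      · apply Measure.integrableOn_of_bounded (M := C * B ω) measure_Ioc_lt_top.ne
          hsecm.aestronglyMeasurable
        filter_upwards [ae_restrict_mem measurableSet_Ioc] with u hu
        rw [Real.norm_eq_abs, abs_of_nonneg (mul_nonneg (hpnonneg _) (by linarith [hu.2]))]
        exact mul_le_mul (hpbdd _) (by linarith [hu.1]) (by linarith [hu.2]) hC0
      · filter_upwards [ae_restrict_mem measurableSet_Ioc] with u hu
        simp only [Pi.zero_apply]
        exact mul_nonneg (hpnonneg _) (by linarith [hu.2])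
    rw [e1, e2, e3, e4, add_zero]
  have step2 : ∫ ω, G ω ∂P = (∫⁻ ω, ENNReal.ofReal (G ω) ∂P).toReal :=
    integral_eq_lintegral_of_nonneg_ae (ae_of_all _ hGnn) hGm.aestronglyMeasurable
  have hswapm : AEMeasurable (Function.uncurry fun (u : ℝ) (ω : Ω) => ψ (u, ω))
      ((volume.restrict (Set.Ioi (0:ℝ))).prod P) := by
    have h := hψm.aemeasurable (μ := (volume.restrict (Set.Ioi (0:ℝ))).prod P)
    simpa only [Function.uncurry_def, Prod.mk.eta] using h
  have step3 : ∫⁻ ω, ENNReal.ofReal (G ω) ∂P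
      = ∫⁻ u in Set.Ioi (0:ℝ), ∫⁻ ω, ψ (u, ω) ∂P := by
    calc ∫⁻ ω, ENNReal.ofReal (G ω) ∂P
        = ∫⁻ ω, (∫⁻ u in Set.Ioi (0:ℝ), ψ (u, ω)) ∂P := by
          exact lintegral_congr fun ω => step1 ω
      _ = ∫⁻ u in Set.Ioi (0:ℝ), ∫⁻ ω, ψ (u, ω) ∂P :=
          (lintegral_lintegral_swap hswapm).symm
  -- independence step
  have hXB : IndepFun (fun ω (t : ℝ) => X t ω) B P :=
    (ProbabilityTheory.IndepFun_iff_Indep _ _ _).2 hindep.symm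
  have step4 : ∫⁻ u in Set.Ioi (0:ℝ), ∫⁻ ω, ψ (u, ω) ∂P
      = ∫⁻ u in Set.Ioi (0:ℝ), K * ∫⁻ ω, ENNReal.ofReal (B ω - u) ∂P := by
    apply setLIntegral_congr_fun measurableSet_Ioi
    refine fun u (hu : u ∈ Set.Ioi (0:ℝ)) => ?_
    have hiu : IndepFun (fun ω => ENNReal.ofReal (p (X u ω)))
        (fun ω => ENNReal.ofReal (B ω - u)) P := by
      have h := hXB.comp (φ := fun f : ℝ → S => ENNReal.ofReal (p (f u)))
        (ψ := fun b : ℝ => ENNReal.ofReal (b - u))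
        ((hpmeas.comp (measurable_pi_apply u)).ennreal_ofReal)
        ((measurable_id.sub measurable_const).ennreal_ofReal)
      simpa only [Function.comp_def] using h
    have hm1 : Measurable fun ω => ENNReal.ofReal (p (X u ω)) :=
      ((hpmeas.comp (hXum u)).ennreal_ofReal)
    have hm2 : Measurable fun ω => ENNReal.ofReal (B ω - u) :=
      ((hBmeas.sub measurable_const).ennreal_ofReal)
    have hmul := lintegral_mul_eq_lintegral_mul_lintegral_of_indepFun hm1 hm2 hiu
    simp only [Pi.mul_apply] at hmul
    have hlaw : ∫⁻ ω, ENNReal.ofReal (p (X u ω)) ∂P = K := by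
      rw [hKdef, ← hXlaw u (le_of_lt (Set.mem_Ioi.1 hu)),
        lintegral_map (hpmeas.ennreal_ofReal) (hXum u)]
    calc ∫⁻ ω, ψ (u, ω) ∂P
        = ∫⁻ ω, (ENNReal.ofReal (p (X u ω)) * ENNReal.ofReal (B ω - u)) ∂P := rfl
      _ = (∫⁻ ω, ENNReal.ofReal (p (X u ω)) ∂P) * ∫⁻ ω, ENNReal.ofReal (B ω - u) ∂P := hmul
      _ = K * ∫⁻ ω, ENNReal.ofReal (B ω - u) ∂P := by rw [hlaw]
  have hinm : Measurable fun u : ℝ => ∫⁻ ω, ENNReal.ofReal (B ω - u) ∂P := by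
    apply Measurable.lintegral_prod_right (f := fun (u : ℝ) (ω : Ω) => ENNReal.ofReal (B ω - u))
    have h : Measurable fun q : ℝ × Ω => ENNReal.ofReal (B q.2 - q.1) :=
      ((hBmeas.comp measurable_snd).sub measurable_fst).ennreal_ofReal
    simpa only [Function.uncurry_def] using h
  have step5 : ∫⁻ u in Set.Ioi (0:ℝ), K * ∫⁻ ω, ENNReal.ofReal (B ω - u) ∂P
      = K * ∫⁻ u in Set.Ioi (0:ℝ), ∫⁻ ω, ENNReal.ofReal (B ω - u) ∂P :=
    lintegral_const_mul K hinm
  have step6 : ∫⁻ u in Set.Ioi (0:ℝ), ∫⁻ ω, ENNReal.ofReal (B ω - u) ∂P = M := by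
    have hswapm2 : AEMeasurable
        (Function.uncurry fun (u : ℝ) (ω : Ω) => ENNReal.ofReal (B ω - u))
        ((volume.restrict (Set.Ioi (0:ℝ))).prod P) := by
      have h : Measurable fun q : ℝ × Ω => ENNReal.ofReal (B q.2 - q.1) :=
        ((hBmeas.comp measurable_snd).sub measurable_fst).ennreal_ofReal
      simpa only [Function.uncurry_def] using h.aemeasurable
    rw [lintegral_lintegral_swap hswapm2, hMdef]
    exact lintegral_congr fun ω => aux_halfsq_stmt10 (B ω) (hBnonneg ω)
  have hKreal : K.toReal = ∫ x, p x ∂ν := by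
    rw [integral_eq_lintegral_of_nonneg_ae (ae_of_all _ hpnonneg) hpmeas.aestronglyMeasurable]
  have hMreal : M.toReal = (∫ ω, B ω ^ 2 ∂P) / 2 := by
    rw [← integral_div]
    rw [integral_eq_lintegral_of_nonneg_ae
      (ae_of_all _ fun ω => by positivity)
      (((hBmeas.pow_const 2).div_const 2).aestronglyMeasurable)]
  have key : ∫ ω, G ω ∂P = (∫ x, p x ∂ν) * (∫ ω, B ω ^ 2 ∂P) / 2 := by
    rw [step2, step3, step4, step5, step6, ENNReal.toReal_mul, hKreal, hMreal]
    ring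
  ------------------------------------------------------------------
  -- Dominated convergence in ε
  ------------------------------------------------------------------
  rw [← key]
  apply tendsto_integral_filter_of_dominated_convergence (bound := fun ω => C * B ω ^ 2 / 2)
  · -- a.e. strong measurability of each F ε
    filter_upwards with ε
    have hjm : Measurable fun q : ℝ × Ω =>
        p (X q.1 q.2) * Real.exp (-ε * ∫ s in (0:ℝ)..q.1, p (X s q.2)) * (B q.2 - q.1) :=
      (hpXm.mul ((measurable_const.mul hIjm).exp)).mul
        ((hBmeas.comp measurable_snd).sub measurable_fst)
    have h2 : Measurable fun ω : Ω => (B ω, ω) := hBmeas.prodMk measurable_id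
    have h3 := ((aux_sm_stmt10 (g := fun u ω =>
        p (X u ω) * Real.exp (-ε * ∫ s in (0:ℝ)..u, p (X s ω)) * (B ω - u)) hjm).measurable).comp h2
    simp only [Function.comp_def] at h3
    exact h3.aestronglyMeasurable
  · -- the uniform bound
    filter_upwards [self_mem_nhdsWithin] with ε (hε : ε ∈ Set.Ioi (0:ℝ))
    refine ae_of_all _ fun ω => ?_
    have hb := hBnonneg ω
    have hεnn : (0:ℝ) ≤ ε := le_of_lt (Set.mem_Ioi.1 hε)
    have hexple : ∀ u, 0 ≤ u →
        Real.exp (-ε * ∫ s in (0:ℝ)..u, p (X s ω)) ≤ 1 := fun u hu => by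
      rw [neg_mul]
      exact Real.exp_le_one_iff.2 (neg_nonpos.2 (mul_nonneg hεnn (hI0 ω u hu)))
    have hsecm : Measurable fun u : ℝ =>
        p (X u ω) * Real.exp (-ε * ∫ s in (0:ℝ)..u, p (X s ω)) * (B ω - u) := by
      have hIm : Measurable fun u : ℝ => ∫ s in (0:ℝ)..u, p (X s ω) :=
        aux_sec_stmt10 (g := fun u ω => ∫ s in (0:ℝ)..u, p (X s ω)) hIjm ω
      exact ((aux_sec_stmt10 (g := fun u ω => p (X u ω)) hpXm ω).mul
        ((measurable_const.mul hIm).exp)).mul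
        (measurable_const.sub measurable_id)
    have hnnF : 0 ≤ ∫ u in (0:ℝ)..(B ω),
        p (X u ω) * Real.exp (-ε * ∫ s in (0:ℝ)..u, p (X s ω)) * (B ω - u) :=
      intervalIntegral.integral_nonneg hb fun u hu =>
        mul_nonneg (mul_nonneg (hpnonneg _) (Real.exp_nonneg _)) (by linarith [hu.2])
    have hint1 : IntervalIntegrable (fun u =>
        p (X u ω) * Real.exp (-ε * ∫ s in (0:ℝ)..u, p (X s ω)) * (B ω - u))
        volume 0 (B ω) := by
      rw [intervalIntegrable_iff_integrableOn_Ioc_of_le hb]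
      apply Measure.integrableOn_of_bounded (M := C * B ω) measure_Ioc_lt_top.ne
        hsecm.aestronglyMeasurable
      filter_upwards [ae_restrict_mem measurableSet_Ioc] with u hu
      rw [Real.norm_eq_abs, abs_of_nonneg
        (mul_nonneg (mul_nonneg (hpnonneg _) (Real.exp_nonneg _)) (by linarith [hu.2]))]
      calc p (X u ω) * Real.exp (-ε * ∫ s in (0:ℝ)..u, p (X s ω)) * (B ω - u)
          ≤ (C * 1) * (B ω) := by
            apply mul_le_mul
            · exact mul_le_mul (hpbdd _) (hexple u (le_of_lt hu.1))
                (Real.exp_nonneg _) hC0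
            · linarith [hu.1]
            · linarith [hu.2]
            · exact mul_nonneg hC0 zero_le_one
        _ = C * B ω := by ring
    have hint2 : IntervalIntegrable (fun u => C * (B ω - u)) volume 0 (B ω) :=
      ((continuous_const.mul (continuous_const.sub continuous_id)).intervalIntegrable _ _)
    have hle : (∫ u in (0:ℝ)..(B ω),
        p (X u ω) * Real.exp (-ε * ∫ s in (0:ℝ)..u, p (X s ω)) * (B ω - u))
        ≤ ∫ u in (0:ℝ)..(B ω), C * (B ω - u) := by
      apply intervalIntegral.integral_mono_on hb hint1 hint2
      intro u hu
      have h1 : p (X u ω) * Real.exp (-ε * ∫ s in (0:ℝ)..u, p (X s ω)) ≤ C := by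
        calc p (X u ω) * Real.exp (-ε * ∫ s in (0:ℝ)..u, p (X s ω))
            ≤ C * 1 := mul_le_mul (hpbdd _) (hexple u hu.1) (Real.exp_nonneg _) hC0
          _ = C := mul_one C
      exact mul_le_mul_of_nonneg_right h1 (by linarith [hu.2])
    have hval : (∫ u in (0:ℝ)..(B ω), C * (B ω - u)) = C * B ω ^ 2 / 2 := by
      rw [intervalIntegral.integral_const_mul,
        intervalIntegral.integral_sub intervalIntegrable_const
          (continuous_id'.intervalIntegrable _ _),
        intervalIntegral.integral_const, integral_id, smul_eq_mul]
      ring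
    rw [Real.norm_eq_abs, abs_of_nonneg hnnF]
    exact hle.trans (le_of_eq hval)
  · -- integrability of the bound
    have : (fun ω => C * B ω ^ 2 / 2) = fun ω => (C / 2) * B ω ^ 2 := by
      funext ω; ring
    rw [this]
    exact hB2.const_mul _
  · -- pointwise convergence
    refine ae_of_all _ fun ω => ?_
    have hb := hBnonneg ω
    simp only [intervalIntegral.integral_of_le hb]
    have hGo : G ω = ∫ u in Set.Ioc (0:ℝ) (B ω), p (X u ω) * (B ω - u) :=
      intervalIntegral.integral_of_le hb
    rw [hGo]
    apply tendsto_integral_filter_of_dominated_convergence (bound := fun _ => C * B ω)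
    · filter_upwards with ε
      have hIm : Measurable fun u : ℝ => ∫ s in (0:ℝ)..u, p (X s ω) :=
        aux_sec_stmt10 (g := fun u ω => ∫ s in (0:ℝ)..u, p (X s ω)) hIjm ω
      exact (((aux_sec_stmt10 (g := fun u ω => p (X u ω)) hpXm ω).mul
        ((measurable_const.mul hIm).exp)).mul
        (measurable_const.sub measurable_id)).aestronglyMeasurable
    · filter_upwards [self_mem_nhdsWithin] with ε (hε : ε ∈ Set.Ioi (0:ℝ))
      filter_upwards [ae_restrict_mem measurableSet_Ioc] with u hu
      have hεnn : (0:ℝ) ≤ ε := le_of_lt (Set.mem_Ioi.1 hε)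
      have hexple : Real.exp (-ε * ∫ s in (0:ℝ)..u, p (X s ω)) ≤ 1 := by
        rw [neg_mul]
        exact Real.exp_le_one_iff.2 (neg_nonpos.2 (mul_nonneg hεnn (hI0 ω u (le_of_lt hu.1))))
      rw [Real.norm_eq_abs, abs_of_nonneg
        (mul_nonneg (mul_nonneg (hpnonneg _) (Real.exp_nonneg _)) (by linarith [hu.2]))]
      calc p (X u ω) * Real.exp (-ε * ∫ s in (0:ℝ)..u, p (X s ω)) * (B ω - u)
          ≤ (C * 1) * B ω := by
            apply mul_le_mul
            · exact mul_le_mul (hpbdd _) hexple (Real.exp_nonneg _) hC0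
            · linarith [hu.1]
            · linarith [hu.2]
            · exact mul_nonneg hC0 zero_le_one
        _ = C * B ω := by ring
    · exact integrableOn_const measure_Ioc_lt_top.ne
    · refine ae_of_all _ fun u => ?_
      have hexp : Tendsto (fun ε : ℝ => Real.exp (-ε * ∫ s in (0:ℝ)..u, p (X s ω)))
          (𝓝 0) (𝓝 1) := by
        have hc : Continuous fun ε : ℝ => Real.exp (-ε * ∫ s in (0:ℝ)..u, p (X s ω)) :=
          Real.continuous_exp.comp ((continuous_neg.comp continuous_id).mul continuous_const)
        have := hc.tendsto 0
        simpa using this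
      have := ((tendsto_const_nhds (x := p (X u ω))).mul hexp).mul
        (tendsto_const_nhds (x := B ω - u))
      simp only [mul_one] at this
      exact this.mono_left nhdsWithin_le_nhds
end
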